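/- arXiv:2302.01208 — 11 statements merged into one kernel-verified Lean document; each statement's English description precedes it below -/
import Mathlib

section
/- Let K be a number field regarded as a subfield of ℂ, let d ≥ 2 be an integer such that K contains a primitive d-th root of unity ε, and let v ∈ K. Set l(x) = x + v. Let h₁, h₂ be polynomials over K of degree at least 2 such that there exist polynomials P, Q ∈ ℂ[x] with h₂∘l = P∘P_d and (l⁻¹∘h₁∘l)(x) = x·Q(x^d). Then for every integer j ≥ 0 the set of pairs (a,b) ∈ K × K satisfying h₂(h₁^{∘j}(a)) = h₂(h₁^{∘j}(b)) and h₁^{∘j}(a) ≠ h₁^{∘j}(b) is infinite; indeed infinitely many such pairs lie on the line b = εa + v(1 − ε). -/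
open Polynomial

theorem stmt1 (K : Subfield ℂ) [NumberField K] (d : ℕ) (hd : 2 ≤ d)
    (ε : ℂ) (hεK : ε ∈ K) (hε : IsPrimitiveRoot ε d)
    (v : ℂ) (hv : v ∈ K)
    (h₁ h₂ : Polynomial ℂ)
    (hh₁K : ∀ n : ℕ, h₁.coeff n ∈ K) (hh₂K : ∀ n : ℕ, h₂.coeff n ∈ K)
    (hdeg₁ : 2 ≤ h₁.natDegree) (hdeg₂ : 2 ≤ h₂.natDegree)
    (P Q : Polynomial ℂ)
    (hP : h₂.comp (X + C v) = P.comp (X ^ d))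
    (hQ : (X - C v).comp (h₁.comp (X + C v)) = X * Q.comp (X ^ d)) :
    ∀ j : ℕ,
      {p : ℂ × ℂ | p.1 ∈ K ∧ p.2 ∈ K ∧
        h₂.eval ((fun x => h₁.eval x)^[j] p.1) = h₂.eval ((fun x => h₁.eval x)^[j] p.2) ∧
        (fun x => h₁.eval x)^[j] p.1 ≠ (fun x => h₁.eval x)^[j] p.2}.Infinite ∧
      {p : ℂ × ℂ | (p.1 ∈ K ∧ p.2 ∈ K ∧
        h₂.eval ((fun x => h₁.eval x)^[j] p.1) = h₂.eval ((fun x => h₁.eval x)^[j] p.2) ∧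
        (fun x => h₁.eval x)^[j] p.1 ≠ (fun x => h₁.eval x)^[j] p.2) ∧
        p.2 = ε * p.1 + v * (1 - ε)}.Infinite := by
  have hεd : ε ^ d = 1 := hε.pow_eq_one
  have hεne1 : ε ≠ 1 := hε.ne_one (by omega)
  set F : ℂ → ℂ := fun x => h₁.eval x with hF
  -- basic evaluation identity from hQ
  have hfe : ∀ y : ℂ, h₁.eval (y + v) - v = y * Q.eval (y ^ d) := by
    intro y
    have := congrArg (fun p => p.eval y) hQ
    simpa using this
  -- equivariance of one step
  have key1 : ∀ s : ℂ, F (ε * s + v) = ε * (F (s + v) - v) + v := by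
    intro s
    have h1 := hfe (ε * s)
    have h2 := hfe s
    have h3 : h₁.eval (ε * s + v) - v = ε * (h₁.eval (s + v) - v) := by
      rw [h1, h2, mul_pow, hεd, one_mul]; ring
    simp only [hF]
    linear_combination h3
  -- equivariance of iterates
  have key2 : ∀ (n : ℕ) (a : ℂ), F^[n] (ε * (a - v) + v) = ε * (F^[n] a - v) + v := by
    intro n
    induction n with
    | zero => intro a; simp
    | succ n ih =>
      intro a
      rw [Function.iterate_succ_apply', Function.iterate_succ_apply', ih a, key1,
        sub_add_cancel]
  -- h₂ identity from hP
  have key3 : ∀ t : ℂ, h₂.eval (ε * t + v) = h₂.eval (t + v) := by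
    intro t
    have e1 := congrArg (fun p => p.eval (ε * t)) hP
    have e2 := congrArg (fun p => p.eval t) hP
    simp only [eval_comp, eval_add, eval_X, eval_C, eval_pow] at e1 e2
    rw [e1, e2, mul_pow, hεd, one_mul]
  -- fibers of iterates are finite
  have hstep : ∀ c : ℂ, {x : ℂ | F x = c}.Finite := by
    intro c
    have hne : h₁ - C c ≠ 0 := by
      intro h
      have : h₁ = C c := by linear_combination (norm := ring_nf) h
      rw [this] at hdeg₁
      simp [natDegree_C] at hdeg₁
    have := Polynomial.finite_setOf_isRoot hne
    refine this.subset ?_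
    intro x hx
    simp only [Set.mem_setOf_eq, IsRoot.def, eval_sub, eval_C]
    simp only [Set.mem_setOf_eq, hF] at hx
    rw [hx, sub_self]
  have hfin : ∀ (n : ℕ) (c : ℂ), {x : ℂ | F^[n] x = c}.Finite := by
    intro n
    induction n with
    | zero => intro c; simpa using Set.finite_singleton c
    | succ n ih =>
      intro c
      have hsub : {x : ℂ | F^[n+1] x = c} ⊆ ⋃ b ∈ {y : ℂ | F y = c}, {x : ℂ | F^[n] x = b} := by
        intro x hx
        simp only [Set.mem_setOf_eq, Function.iterate_succ_apply'] at hx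
        simp only [Set.mem_iUnion, Set.mem_setOf_eq]
        exact ⟨F^[n] x, hx, rfl⟩
      exact (Set.Finite.biUnion (hstep c) (fun b _ => ih b)).subset hsub
  -- K is infinite as a set
  have hKinf : {x : ℂ | x ∈ K}.Infinite := by
    exact Set.infinite_of_injective_forall_mem (f := fun n : ℕ => (n : ℂ))
      Nat.cast_injective (fun n => natCast_mem K n)
  intro j
  -- the good set of first coordinates
  have hAinf : ({x : ℂ | x ∈ K} \ {x : ℂ | F^[j] x = v}).Infinite :=
    hKinf.diff (hfin j v)
  have hinj : Function.Injective (fun a : ℂ => (a, ε * a + v * (1 - ε))) :=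
    fun a b hab => congrArg Prod.fst hab
  have himg := hAinf.image (hinj.injOn)
  have hsub2 : (fun a : ℂ => (a, ε * a + v * (1 - ε))) ''
      ({x : ℂ | x ∈ K} \ {x : ℂ | F^[j] x = v}) ⊆
      {p : ℂ × ℂ | (p.1 ∈ K ∧ p.2 ∈ K ∧
        h₂.eval ((fun x => h₁.eval x)^[j] p.1) = h₂.eval ((fun x => h₁.eval x)^[j] p.2) ∧
        (fun x => h₁.eval x)^[j] p.1 ≠ (fun x => h₁.eval x)^[j] p.2) ∧
        p.2 = ε * p.1 + v * (1 - ε)} := by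
    rintro p ⟨a, ⟨haK, hav⟩, rfl⟩
    simp only [Set.mem_setOf_eq] at haK hav
    have hb : ε * a + v * (1 - ε) = ε * (a - v) + v := by ring
    have hbit : F^[j] (ε * a + v * (1 - ε)) = ε * (F^[j] a - v) + v := by
      rw [hb]; exact key2 j a
    refine ⟨⟨haK, ?_, ?_, ?_⟩, rfl⟩
    · exact add_mem (mul_mem hεK haK) (mul_mem hv (sub_mem (one_mem K) hεK))
    · show h₂.eval (F^[j] a) = h₂.eval (F^[j] (ε * a + v * (1 - ε)))
      rw [hbit, key3 (F^[j] a - v), sub_add_cancel]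
    · show F^[j] a ≠ F^[j] (ε * a + v * (1 - ε))
      rw [hbit]
      intro h
      apply hav
      have : (F^[j] a - v) * (1 - ε) = 0 := by linear_combination h
      rcases mul_eq_zero.mp this with h' | h'
      · linear_combination h'
      · exact absurd (by linear_combination -h') hεne1
  have h2inf := himg.mono hsub2
  exact ⟨h2inf.mono (fun p hp => hp.1), h2inf⟩
end

section
/- Let K be a number field regarded as a subfield of ℂ, let d ≥ 2 and r ≥ 2 be integers with d dividing r − 1, suppose K contains a primitive d-th root of unity ε, and let v ∈ K and u ∈ ℂ∖{0}. Set l(x) = ux + v. Let h₁, h₂ be polynomials over K of degree at least 2 such that l⁻¹∘h₁∘l = P_r and h₂∘l = P∘P_d for some polynomial P ∈ ℂ[x]. Then for every integer j ≥ 0 the set of pairs (a,b) ∈ K × K satisfying h₂(h₁^{∘j}(a)) = h₂(h₁^{∘j}(b)) and h₁^{∘j}(a) ≠ h₁^{∘j}(b) is infinite; indeed infinitely many such pairs lie on the line b = εa + v(1 − ε). -/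
open Polynomial

theorem stmt2 (K : Subfield ℂ) [NumberField K] (d r : ℕ) (hd : 2 ≤ d) (hr : 2 ≤ r)
    (hdvd : d ∣ (r - 1))
    (ε : ℂ) (hεK : ε ∈ K) (hε : IsPrimitiveRoot ε d)
    (v : ℂ) (hv : v ∈ K) (u : ℂ) (hu : u ≠ 0)
    (h₁ h₂ : Polynomial ℂ)
    (hh₁K : ∀ n : ℕ, h₁.coeff n ∈ K) (hh₂K : ∀ n : ℕ, h₂.coeff n ∈ K)
    (hdeg₁ : 2 ≤ h₁.natDegree) (hdeg₂ : 2 ≤ h₂.natDegree)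
    (hh₁ : (C u⁻¹ * (X - C v)).comp (h₁.comp (C u * X + C v)) = X ^ r)
    (P : Polynomial ℂ)
    (hP : h₂.comp (C u * X + C v) = P.comp (X ^ d)) :
    ∀ j : ℕ,
      {p : ℂ × ℂ | p.1 ∈ K ∧ p.2 ∈ K ∧
        h₂.eval ((fun x => h₁.eval x)^[j] p.1) = h₂.eval ((fun x => h₁.eval x)^[j] p.2) ∧
        (fun x => h₁.eval x)^[j] p.1 ≠ (fun x => h₁.eval x)^[j] p.2}.Infinite ∧
      {p : ℂ × ℂ | (p.1 ∈ K ∧ p.2 ∈ K ∧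
        h₂.eval ((fun x => h₁.eval x)^[j] p.1) = h₂.eval ((fun x => h₁.eval x)^[j] p.2) ∧
        (fun x => h₁.eval x)^[j] p.1 ≠ (fun x => h₁.eval x)^[j] p.2) ∧
        p.2 = ε * p.1 + v * (1 - ε)}.Infinite := by
  intro j
  -- basic facts about ε
  have hεd : ε ^ d = 1 := hε.pow_eq_one
  have hε1 : ε ≠ 1 := hε.ne_one (by omega)
  have hεr : ε ^ r = ε := by
    obtain ⟨k, hk⟩ := hdvd
    have hr' : r = d * k + 1 := by omega
    rw [hr', pow_succ, pow_mul, hεd, one_pow, one_mul]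
  have hεrj : ε ^ (r ^ j) = ε := by
    induction j with
    | zero => simp
    | succ n ih => rw [pow_succ, pow_mul, ih, hεr]
  -- evaluation facts
  have heval₁ : ∀ x : ℂ, h₁.eval (u * x + v) = u * x ^ r + v := by
    intro x
    have h := congrArg (eval x) hh₁
    simp [eval_comp] at h
    field_simp at h
    linear_combination h
  have heval₂ : ∀ x : ℂ, h₂.eval (u * x + v) = P.eval (x ^ d) := by
    intro x
    have h := congrArg (eval x) hP
    simpa [eval_comp] using h
  have hiter : ∀ m : ℕ, ∀ x : ℂ, (fun x => h₁.eval x)^[m] (u * x + v) = u * x ^ (r ^ m) + v := by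
    intro m
    induction m with
    | zero => intro x; simp
    | succ n ih =>
      intro x
      rw [Function.iterate_succ_apply]
      rw [heval₁ x, ih (x ^ r), ← pow_mul, ← pow_succ']
  -- the set of good first coordinates
  set g : ℂ → ℂ × ℂ := fun a => (a, ε * a + v * (1 - ε)) with hg
  have hA : ({a : ℂ | a ∈ K} \ {v}).Infinite := by
    have hKinf : {a : ℂ | a ∈ K}.Infinite := by
      apply Set.infinite_of_injective_forall_mem (f := fun n : ℕ => (n : ℂ))
      · exact Nat.cast_injective
      · intro n; exact natCast_mem K n
    exact hKinf.diff (Set.finite_singleton v)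
  have hmem : ∀ a ∈ ({a : ℂ | a ∈ K} \ {v}), g a ∈
      {p : ℂ × ℂ | (p.1 ∈ K ∧ p.2 ∈ K ∧
        h₂.eval ((fun x => h₁.eval x)^[j] p.1) = h₂.eval ((fun x => h₁.eval x)^[j] p.2) ∧
        (fun x => h₁.eval x)^[j] p.1 ≠ (fun x => h₁.eval x)^[j] p.2) ∧
        p.2 = ε * p.1 + v * (1 - ε)} := by
    rintro a ⟨haK, hav⟩
    simp only [Set.mem_singleton_iff] at hav
    obtain ⟨x, hx0, hxa⟩ : ∃ x : ℂ, x ≠ 0 ∧ u * x + v = a :=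
      ⟨u⁻¹ * (a - v), mul_ne_zero (inv_ne_zero hu) (sub_ne_zero.mpr hav), by field_simp; ring⟩
    have hxb : u * (ε * x) + v = ε * a + v * (1 - ε) := by
      rw [← hxa]; ring
    have h1a : (fun x => h₁.eval x)^[j] a = u * x ^ (r ^ j) + v := by
      rw [← hxa, hiter j]
    have h1b : (fun x => h₁.eval x)^[j] (ε * a + v * (1 - ε)) =
        u * (ε * x ^ (r ^ j)) + v := by
      rw [← hxb, hiter j, mul_pow, hεrj]
    refine ⟨⟨haK, ?_, ?_, ?_⟩, rfl⟩
    · exact K.add_mem (K.mul_mem hεK haK)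
        (K.mul_mem hv (K.sub_mem K.one_mem hεK))
    · rw [h1a, h1b, heval₂, heval₂, mul_pow, hεd, one_mul]
    · rw [h1a, h1b]
      intro h
      have h' : x ^ (r ^ j) = ε * x ^ (r ^ j) := mul_left_cancel₀ hu
        (by linear_combination h)
      have hxr : x ^ (r ^ j) ≠ 0 := pow_ne_zero _ hx0
      exact hε1 ((mul_left_eq_self₀.mp h'.symm).resolve_right hxr)
  have hginj : Set.InjOn g ({a : ℂ | a ∈ K} \ {v}) := by
    intro a _ b _ h
    exact congrArg Prod.fst h
  have h2 : {p : ℂ × ℂ | (p.1 ∈ K ∧ p.2 ∈ K ∧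
        h₂.eval ((fun x => h₁.eval x)^[j] p.1) = h₂.eval ((fun x => h₁.eval x)^[j] p.2) ∧
        (fun x => h₁.eval x)^[j] p.1 ≠ (fun x => h₁.eval x)^[j] p.2) ∧
        p.2 = ε * p.1 + v * (1 - ε)}.Infinite := by
    refine (hA.image hginj).mono ?_
    rintro p ⟨a, ha, rfl⟩
    exact hmem a ha
  refine ⟨h2.mono ?_, h2⟩
  rintro p ⟨hp, -⟩
  exact hp
end

section
/- Let K be a number field regarded as a subfield of ℂ, let r ≥ 3 be an odd integer, σ ∈ {1, −1}, u ∈ ℂ∖{0} and v ∈ K. Set l(x) = ux + v. Let h₁, h₂ be polynomials over K of degree at least 2 such that l⁻¹∘h₁∘l = σ·T_r and h₂∘l = P∘T_2 for some polynomial P ∈ ℂ[x]. Then for every integer j ≥ 0 the set of pairs (a,b) ∈ K × K satisfying h₂(h₁^{∘j}(a)) = h₂(h₁^{∘j}(b)) and h₁^{∘j}(a) ≠ h₁^{∘j}(b) is infinite; indeed infinitely many such pairs lie on the line a + b = 2v. -/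
open Polynomial

private noncomputable def chebIter (f : Polynomial ℂ) : ℕ → Polynomial ℂ
  | 0 => X
  | j+1 => f.comp (chebIter f j)

private lemma chebIter_eval (f : Polynomial ℂ) (j : ℕ) (x : ℂ) :
    (chebIter f j).eval x = (fun y => f.eval y)^[j] x := by
  induction j with
  | zero => simp [chebIter]
  | succ j ih => simp [chebIter, Function.iterate_succ_apply', ih, eval_comp]

theorem stmt3 (K : Subfield ℂ) [NumberField K]
    (T : ℕ → Polynomial ℂ)
    (hT : ∀ (r : ℕ) (z : ℂ), z ≠ 0 → (T r).eval (z + z⁻¹) = z ^ r + z⁻¹ ^ r)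
    (r : ℕ) (hr : 3 ≤ r) (hodd : Odd r)
    (σ : ℂ) (hσ : σ = 1 ∨ σ = -1)
    (u : ℂ) (hu : u ≠ 0) (v : ℂ) (hv : v ∈ K)
    (h₁ h₂ : Polynomial ℂ)
    (hh₁K : ∀ n : ℕ, h₁.coeff n ∈ K) (hh₂K : ∀ n : ℕ, h₂.coeff n ∈ K)
    (hdeg₁ : 2 ≤ h₁.natDegree) (hdeg₂ : 2 ≤ h₂.natDegree)
    (hh₁ : (C u⁻¹ * (X - C v)).comp (h₁.comp (C u * X + C v)) = C σ * T r)
    (P : Polynomial ℂ)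
    (hP : h₂.comp (C u * X + C v) = P.comp (T 2)) :
    ∀ j : ℕ,
      {p : ℂ × ℂ | p.1 ∈ K ∧ p.2 ∈ K ∧
        h₂.eval ((fun x => h₁.eval x)^[j] p.1) = h₂.eval ((fun x => h₁.eval x)^[j] p.2) ∧
        (fun x => h₁.eval x)^[j] p.1 ≠ (fun x => h₁.eval x)^[j] p.2}.Infinite ∧
      {p : ℂ × ℂ | (p.1 ∈ K ∧ p.2 ∈ K ∧
        h₂.eval ((fun x => h₁.eval x)^[j] p.1) = h₂.eval ((fun x => h₁.eval x)^[j] p.2) ∧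
        (fun x => h₁.eval x)^[j] p.1 ≠ (fun x => h₁.eval x)^[j] p.2) ∧
        p.1 + p.2 = 2 * v}.Infinite := by
  -- every complex number is z + z⁻¹ for some nonzero z
  have hsurj : ∀ w : ℂ, ∃ z : ℂ, z ≠ 0 ∧ z + z⁻¹ = w := by
    intro w
    obtain ⟨z, hz⟩ := Complex.exists_root (f := X ^ 2 - C w * X + 1)
      (by
        have h1 : (X ^ 2 - C w * X + 1 : Polynomial ℂ) = C 1 * X ^ 2 + C (-w) * X + C 1 := by
          ring_nf
          simp [map_neg]
          ring
        rw [h1, Polynomial.degree_quadratic one_ne_zero]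
        norm_num)
    have hz' : z ^ 2 - w * z + 1 = 0 := by
      simpa using hz
    have hz0 : z ≠ 0 := by
      intro h
      rw [h] at hz'
      simp at hz'
    refine ⟨z, hz0, ?_⟩
    field_simp
    linear_combination hz'
  -- notation for evals of Chebyshev polynomials
  set t : ℕ → ℂ → ℂ := fun n w => (T n).eval w with ht
  have htr_odd : ∀ w : ℂ, t r (-w) = - t r w := by
    intro w
    obtain ⟨z, hz0, hzw⟩ := hsurj w
    have h1 : t r w = z ^ r + z⁻¹ ^ r := by rw [ht]; simp only [← hzw]; exact hT r z hz0
    have h2 : t r (-w) = (-z) ^ r + (-z)⁻¹ ^ r := by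
      have : (-z) + (-z)⁻¹ = -w := by rw [inv_neg, ← hzw]; ring
      rw [ht]; simp only [← this]; exact hT r (-z) (neg_ne_zero.mpr hz0)
    rw [h1, h2, hodd.neg_pow, inv_neg, hodd.neg_pow]
    ring
  have ht2_even : ∀ w : ℂ, t 2 (-w) = t 2 w := by
    intro w
    obtain ⟨z, hz0, hzw⟩ := hsurj w
    have h1 : t 2 w = z ^ 2 + z⁻¹ ^ 2 := by rw [ht]; simp only [← hzw]; exact hT 2 z hz0
    have h2 : t 2 (-w) = (-z) ^ 2 + (-z)⁻¹ ^ 2 := by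
      have : (-z) + (-z)⁻¹ = -w := by rw [inv_neg, ← hzw]; ring
      rw [ht]; simp only [← this]; exact hT 2 (-z) (neg_ne_zero.mpr hz0)
    rw [h1, h2, inv_neg, neg_pow_two, neg_pow_two]
  have htr2 : t r 2 = 2 := by
    have h := hT r 1 one_ne_zero
    norm_num at h
    show (T r).eval 2 = 2
    exact h
  -- the conjugated map F
  set F : ℂ → ℂ := fun x => σ * t r x with hF
  have hFodd : ∀ x : ℂ, F (-x) = - F x := by
    intro x; simp only [hF, htr_odd]; ring
  have hFiter_odd : ∀ (j : ℕ) (x : ℂ), F^[j] (-x) = - F^[j] x := by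
    intro j
    induction j with
    | zero => simp
    | succ j ih =>
      intro x
      rw [Function.iterate_succ_apply', Function.iterate_succ_apply', ih, hFodd]
  -- key identities from the hypotheses
  have key1 : ∀ x : ℂ, h₁.eval (u * x + v) = u * F x + v := by
    intro x
    have h := congrArg (eval x) hh₁
    simp only [eval_comp, eval_mul, eval_add, eval_sub, eval_C, eval_X] at h
    have h' : u⁻¹ * (h₁.eval (u * x + v) - v) = σ * t r x := h
    field_simp at h'
    simp only [hF]
    linear_combination h'
  have key2 : ∀ x : ℂ, h₂.eval (u * x + v) = P.eval (t 2 x) := by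
    intro x
    have h := congrArg (eval x) hP
    simpa [eval_comp] using h
  -- iterate identity
  have hiter : ∀ (j : ℕ) (x : ℂ),
      (fun y => h₁.eval y)^[j] (u * x + v) = u * F^[j] x + v := by
    intro j
    induction j with
    | zero => simp
    | succ j ih =>
      intro x
      rw [Function.iterate_succ_apply', Function.iterate_succ_apply', ih, key1]
  -- F^[j] 2 is never 0
  have hF2 : ∀ j : ℕ, F^[j] 2 = 2 ∨ F^[j] 2 = 2 * σ := by
    intro j
    induction j with
    | zero => left; simp
    | succ j ih =>
      rw [Function.iterate_succ_apply']
      rcases ih with h | h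
      · rw [h]; right; show σ * t r 2 = 2 * σ; rw [htr2]; ring
      · rw [h]
        have hFval : F (2 * σ) = 2 := by
          rcases hσ with h1 | h1
          · show σ * t r (2 * σ) = 2
            rw [h1, mul_one, one_mul, htr2]
          · show σ * t r (2 * σ) = 2
            rw [h1, show (2 : ℂ) * (-1) = -(2 : ℂ) by norm_num, htr_odd, htr2]
            ring
        rw [hFval]; left; rfl
  have hσ0 : σ ≠ 0 := by rcases hσ with h | h <;> rw [h] <;> norm_num
  intro j
  have hF2ne : F^[j] 2 ≠ 0 := by
    rcases hF2 j with h | h <;> rw [h]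
    · norm_num
    · exact mul_ne_zero two_ne_zero hσ0
  -- the zero set of F^[j] is finite
  have hfeq : (fun y => (C σ * T r).eval y) = F := by
    funext y; simp [hF, ht]
  have hQeval : ∀ x : ℂ, (chebIter (C σ * T r) j).eval x = F^[j] x := by
    intro x; rw [chebIter_eval, hfeq]
  have hQne : chebIter (C σ * T r) j ≠ 0 := by
    intro h
    have := hQeval 2
    rw [h] at this
    simp at this
    exact hF2ne this.symm
  have hzero_fin : {x : ℂ | F^[j] x = 0}.Finite := by
    have h1 : {x : ℂ | F^[j] x = 0} = {x : ℂ | (chebIter (C σ * T r) j).IsRoot x} := by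
      ext x; simp [IsRoot, hQeval]
    rw [h1]
    exact Polynomial.finite_setOf_isRoot hQne
  -- the bad set of a's
  have hg_inj : Function.Injective (fun a : ℂ => (a - v) / u) := by
    intro a b hab
    simp only at hab
    field_simp at hab
    linear_combination hab
  have hbad_fin : {a : ℂ | F^[j] ((a - v) / u) = 0}.Finite := by
    have : {a : ℂ | F^[j] ((a - v) / u) = 0}
        = (fun a : ℂ => (a - v) / u) ⁻¹' {x : ℂ | F^[j] x = 0} := rfl
    rw [this]
    exact Set.Finite.preimage hg_inj.injOn hzero_fin
  -- K is infinite as a set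
  have hKinf : {a : ℂ | a ∈ K}.Infinite := by
    exact Set.infinite_of_injective_forall_mem (f := fun n : ℕ => (n : ℂ))
      Nat.cast_injective (fun n => natCast_mem K n)
  have hSinf : ({a : ℂ | a ∈ K} \ {a : ℂ | F^[j] ((a - v) / u) = 0}).Infinite :=
    hKinf.diff hbad_fin
  -- the image under a ↦ (a, 2v - a)
  have hφinj : Function.Injective (fun a : ℂ => ((a, 2 * v - a) : ℂ × ℂ)) := by
    intro a b hab
    exact congrArg Prod.fst hab
  have himg : ((fun a : ℂ => ((a, 2 * v - a) : ℂ × ℂ)) ''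
      ({a : ℂ | a ∈ K} \ {a : ℂ | F^[j] ((a - v) / u) = 0})).Infinite :=
    hSinf.image hφinj.injOn
  have hsubset : (fun a : ℂ => ((a, 2 * v - a) : ℂ × ℂ)) ''
      ({a : ℂ | a ∈ K} \ {a : ℂ | F^[j] ((a - v) / u) = 0}) ⊆
      {p : ℂ × ℂ | (p.1 ∈ K ∧ p.2 ∈ K ∧
        h₂.eval ((fun x => h₁.eval x)^[j] p.1) = h₂.eval ((fun x => h₁.eval x)^[j] p.2) ∧
        (fun x => h₁.eval x)^[j] p.1 ≠ (fun x => h₁.eval x)^[j] p.2) ∧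
        p.1 + p.2 = 2 * v} := by
    rintro p ⟨a, ⟨haK, haQ⟩, rfl⟩
    dsimp only [Set.mem_setOf_eq]
    set x : ℂ := (a - v) / u with hx
    have hax : u * x + v = a := by rw [hx]; field_simp; ring
    have hbx : u * (-x) + v = 2 * v - a := by rw [← hax]; ring
    have hFx : F^[j] x ≠ 0 := haQ
    refine ⟨⟨haK, ?_, ?_, ?_⟩, by ring⟩
    · exact K.sub_mem (by
        have h2K : (2 : ℂ) ∈ K := by exact_mod_cast natCast_mem K 2
        exact K.mul_mem h2K hv) haK
    · rw [← hbx, ← hax, hiter j x, hiter j (-x), key2, key2, hFiter_odd, ht2_even]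
    · rw [← hbx, ← hax, hiter j x, hiter j (-x), hFiter_odd]
      intro h
      apply hFx
      have : u * F^[j] x = u * (- F^[j] x) := by linear_combination h
      have h2 : F^[j] x = - F^[j] x := mul_left_cancel₀ hu this
      linear_combination h2 / 2
  have hinf2 : {p : ℂ × ℂ | (p.1 ∈ K ∧ p.2 ∈ K ∧
        h₂.eval ((fun x => h₁.eval x)^[j] p.1) = h₂.eval ((fun x => h₁.eval x)^[j] p.2) ∧
        (fun x => h₁.eval x)^[j] p.1 ≠ (fun x => h₁.eval x)^[j] p.2) ∧
        p.1 + p.2 = 2 * v}.Infinite :=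
    himg.mono hsubset
  refine ⟨?_, hinf2⟩
  apply hinf2.mono
  intro p hp
  exact hp.1
end

section
/- Let ε and ε' be roots of unity in ℂ. If the intersection of the two sets A = {(x + x⁻¹, εx + (εx)⁻¹) : x ∈ ℂ∖{0}} and A' = {(y + y⁻¹, ε'y + (ε'y)⁻¹) : y ∈ ℂ∖{0}} is infinite, then ε' = ε or ε' = ε⁻¹. Moreover, for any root of unity ε one has the set equality {(x + x⁻¹, εx + (εx)⁻¹) : x ∈ ℂ∖{0}} = {(x + x⁻¹, ε⁻¹x + (ε⁻¹x)⁻¹) : x ∈ ℂ∖{0}}. -/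
lemma sq_fin_aux (c : ℂ) : {a : ℂ | a ^ 2 = c}.Finite := by
  obtain ⟨z, hz⟩ := Complex.isAlgClosed.exists_pow_nat_eq c two_pos
  apply Set.Finite.subset ((Set.finite_singleton (-z)).insert z)
  intro a ha
  have h : (a - z) * (a + z) = 0 := by
    have ha' : a ^ 2 = c := ha
    linear_combination ha' - hz
  rcases mul_eq_zero.mp h with h | h
  · exact Set.mem_insert_iff.mpr (Or.inl (by linear_combination h))
  · exact Set.mem_insert_iff.mpr (Or.inr (by simp only [Set.mem_singleton_iff]; linear_combination h))

lemma key_aux (a b : ℂ) (ha : a ≠ 0) (hb : b ≠ 0) (h : a + a⁻¹ = b + b⁻¹) :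
    a = b ∨ a = b⁻¹ := by
  have h2 : (a - b) * (a * b - 1) = 0 := by
    field_simp at h
    linear_combination h
  rcases mul_eq_zero.mp h2 with h3 | h3
  · left; exact sub_eq_zero.mp h3
  · right
    have h4 : a * b = 1 := by linear_combination h3
    field_simp
    linear_combination h4

theorem stmt5 (ε ε' : ℂ)
    (hε : ∃ n : ℕ, 0 < n ∧ ε ^ n = 1) (hε' : ∃ n : ℕ, 0 < n ∧ ε' ^ n = 1) :
    (({p : ℂ × ℂ | ∃ x : ℂ, x ≠ 0 ∧ p = (x + x⁻¹, ε * x + (ε * x)⁻¹)} ∩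
      {p : ℂ × ℂ | ∃ y : ℂ, y ≠ 0 ∧ p = (y + y⁻¹, ε' * y + (ε' * y)⁻¹)}).Infinite →
        ε' = ε ∨ ε' = ε⁻¹) ∧
    {p : ℂ × ℂ | ∃ x : ℂ, x ≠ 0 ∧ p = (x + x⁻¹, ε * x + (ε * x)⁻¹)} =
      {p : ℂ × ℂ | ∃ x : ℂ, x ≠ 0 ∧ p = (x + x⁻¹, ε⁻¹ * x + (ε⁻¹ * x)⁻¹)} := by
  obtain ⟨n, hn, h1⟩ := hε
  obtain ⟨m, hm, h1'⟩ := hε'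
  have hε0 : ε ≠ 0 := by
    intro h; rw [h, zero_pow hn.ne'] at h1; exact one_ne_zero h1.symm
  have hε'0 : ε' ≠ 0 := by
    intro h; rw [h, zero_pow hm.ne'] at h1'; exact one_ne_zero h1'.symm
  constructor
  · intro hinf
    by_contra hne
    push_neg at hne
    obtain ⟨hne1, hne2⟩ := hne
    apply hinf
    have : ({p : ℂ × ℂ | ∃ x : ℂ, x ≠ 0 ∧ p = (x + x⁻¹, ε * x + (ε * x)⁻¹)} ∩
        {p : ℂ × ℂ | ∃ y : ℂ, y ≠ 0 ∧ p = (y + y⁻¹, ε' * y + (ε' * y)⁻¹)}) ⊆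
        (fun x : ℂ => (x + x⁻¹, ε * x + (ε * x)⁻¹)) ''
          ({a : ℂ | a ^ 2 = (ε * ε')⁻¹} ∪ {a : ℂ | a ^ 2 = ε' * ε⁻¹}) := by
      rintro p ⟨⟨x, hx0, hpx⟩, ⟨y, hy0, hpy⟩⟩
      have hεx : ε * x ≠ 0 := mul_ne_zero hε0 hx0
      have hε'y : ε' * y ≠ 0 := mul_ne_zero hε'0 hy0
      have heq := hpx.symm.trans hpy
      rw [Prod.mk.injEq] at heq
      obtain ⟨hfst, hsnd⟩ := heq
      refine ⟨x, ?_, hpx.symm⟩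
      rcases key_aux x y hx0 hy0 hfst with hxy | hxy
      · -- y = x
        subst hxy
        rcases key_aux (ε * x) (ε' * x) hεx hε'y hsnd with h | h
        · exact absurd (mul_right_cancel₀ hx0 h).symm hne1
        · left
          show x ^ 2 = (ε * ε')⁻¹
          field_simp at h ⊢
          linear_combination h
      · -- x = y⁻¹
        subst hxy
        rcases key_aux (ε * y⁻¹) (ε' * y) (mul_ne_zero hε0 (inv_ne_zero hy0)) hε'y hsnd with h | h
        · right
          show (y⁻¹) ^ 2 = ε' * ε⁻¹
          field_simp at h ⊢
          linear_combination h
        · exfalso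
          apply hne2
          field_simp at h ⊢
          have h5 : (ε * ε') * y = 1 * y := by linear_combination y * h
          have h6 := mul_right_cancel₀ hy0 h5
          linear_combination h6
    exact Set.Finite.subset (Set.Finite.image _ ((sq_fin_aux _).union (sq_fin_aux _))) this
  · ext p
    simp only [Set.mem_setOf_eq]
    constructor
    · rintro ⟨x, hx0, rfl⟩
      refine ⟨x⁻¹, inv_ne_zero hx0, ?_⟩
      have : ε * x ≠ 0 := mul_ne_zero hε0 hx0
      ext <;> simp <;> field_simp <;> ring
    · rintro ⟨x, hx0, rfl⟩
      refine ⟨x⁻¹, inv_ne_zero hx0, ?_⟩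
      ext <;> simp <;> field_simp <;> ring
end

section
/- Let ε be a root of unity in ℂ with ε ∉ {1, −1}. Then the polynomial Y² − (ε + ε⁻¹)XY + X² + (ε − ε⁻¹)² is irreducible in ℂ[X,Y], and its zero set in ℂ² equals the parametrized set {(z + z⁻¹, εz + (εz)⁻¹) : z ∈ ℂ∖{0}}; that is, {(x,y) ∈ ℂ² : y² − (ε+ε⁻¹)xy + x² + (ε−ε⁻¹)² = 0} = {(z + z⁻¹, εz + (εz)⁻¹) : z ∈ ℂ∖{0}}. -/
open MvPolynomial

lemma aux_sets (ε : ℂ) (hε0 : ε ≠ 0) (hδ : ε - ε⁻¹ ≠ 0) :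
    {p : ℂ × ℂ | p.2 ^ 2 - (ε + ε⁻¹) * p.1 * p.2 + p.1 ^ 2 + (ε - ε⁻¹) ^ 2 = 0} =
      {p : ℂ × ℂ | ∃ z : ℂ, z ≠ 0 ∧ p = (z + z⁻¹, ε * z + (ε * z)⁻¹)} := by
  have hu : ε * ε⁻¹ = 1 := mul_inv_cancel₀ hε0
  ext ⟨x, y⟩
  simp only [Set.mem_setOf_eq]
  constructor
  · intro h
    obtain ⟨z, hz⟩ : ∃ z : ℂ, z ^ 2 - x * z + 1 = 0 := by
      obtain ⟨z, hz⟩ := Complex.exists_root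
        (f := Polynomial.C 1 * Polynomial.X ^ 2 + Polynomial.C (-x) * Polynomial.X
          + Polynomial.C 1) (by rw [Polynomial.degree_quadratic one_ne_zero]; norm_num)
      refine ⟨z, ?_⟩
      have := hz
      simp only [Polynomial.IsRoot, Polynomial.eval_add, Polynomial.eval_mul,
        Polynomial.eval_pow, Polynomial.eval_C, Polynomial.eval_X] at this
      linear_combination this
    have hz0 : z ≠ 0 := by
      intro h0
      rw [h0] at hz
      simp at hz
    have hv : z * z⁻¹ = 1 := mul_inv_cancel₀ hz0
    have hx : x = z + z⁻¹ := by
      field_simp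
      linear_combination -hz
    have key : (y - (ε * z + (ε * z)⁻¹)) * (y - (ε * z⁻¹ + (ε * z⁻¹)⁻¹)) =
        y ^ 2 - (ε + ε⁻¹) * x * y + x ^ 2 + (ε - ε⁻¹) ^ 2 := by
      rw [hx, mul_inv, mul_inv, inv_inv]
      linear_combination (z ^ 2 + (z⁻¹) ^ 2 + 2) * hu + (ε ^ 2 + (ε⁻¹) ^ 2 - 2) * hv
    have hfac := key.trans h
    rcases mul_eq_zero.mp hfac with hy | hy
    · exact ⟨z, hz0, by rw [Prod.mk.injEq]; exact ⟨hx, sub_eq_zero.mp hy⟩⟩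
    · refine ⟨z⁻¹, inv_ne_zero hz0, ?_⟩
      rw [Prod.mk.injEq, inv_inv]
      exact ⟨by rw [hx]; ring, sub_eq_zero.mp hy⟩
  · rintro ⟨z, hz0, hp⟩
    rw [Prod.mk.injEq] at hp
    obtain ⟨hx, hy⟩ := hp
    have hv : z * z⁻¹ = 1 := mul_inv_cancel₀ hz0
    subst hx; subst hy
    rw [mul_inv]
    linear_combination (-(z⁻¹) ^ 2 - z ^ 2 - 2) * hu + (-ε ^ 2 - (ε⁻¹) ^ 2 + 2) * hv

lemma aux_irred (ε : ℂ) (hδ : ε - ε⁻¹ ≠ 0) :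
    Irreducible ((X 1 : MvPolynomial (Fin 2) ℂ) ^ 2 - C (ε + ε⁻¹) * X 0 * X 1
        + X 0 ^ 2 + C ((ε - ε⁻¹) ^ 2)) := by
  have hε0 : ε ≠ 0 := by intro h; rw [h] at hδ; simp at hδ
  obtain ⟨δ, hδdef⟩ : ∃ d : ℂ, ε - ε⁻¹ = d := ⟨_, rfl⟩
  rw [hδdef] at hδ ⊢
  let e : MvPolynomial (Fin 2) ℂ ≃ₐ[ℂ] Polynomial (Polynomial ℂ) :=
    (finSuccEquiv ℂ 1).trans (Polynomial.mapAlgEquiv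
      ((finSuccEquiv ℂ 0).trans (Polynomial.mapAlgEquiv (isEmptyAlgEquiv ℂ (Fin 0)))))
  set A : Polynomial ℂ := -(Polynomial.C (ε + ε⁻¹) * Polynomial.X) with hA
  set B : Polynomial ℂ := Polynomial.X ^ 2 + Polynomial.C (δ ^ 2) with hB
  set q : Polynomial (Polynomial ℂ) :=
    Polynomial.X ^ 2 + Polynomial.C A * Polynomial.X + Polynomial.C B with hq
  have heX0 : e (X 0) = Polynomial.X := by
    rw [show e = ((finSuccEquiv ℂ 1).trans (Polynomial.mapAlgEquiv
      ((finSuccEquiv ℂ 0).trans (Polynomial.mapAlgEquiv (isEmptyAlgEquiv ℂ (Fin 0)))))) from rfl,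
      AlgEquiv.trans_apply, finSuccEquiv_X_zero, Polynomial.coe_mapAlgEquiv, Polynomial.map_X]
  have heX1 : e (X 1) = Polynomial.C Polynomial.X := by
    have s1 : (finSuccEquiv ℂ 1) (X 1 : MvPolynomial (Fin 2) ℂ) = Polynomial.C (X 0) :=
      finSuccEquiv_X_succ (j := 0)
    rw [show e = ((finSuccEquiv ℂ 1).trans (Polynomial.mapAlgEquiv
      ((finSuccEquiv ℂ 0).trans (Polynomial.mapAlgEquiv (isEmptyAlgEquiv ℂ (Fin 0)))))) from rfl,
      AlgEquiv.trans_apply, s1, Polynomial.coe_mapAlgEquiv, Polynomial.map_C]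
    congr 1
    rw [RingHom.coe_coe, AlgEquiv.trans_apply, finSuccEquiv_X_zero,
      Polynomial.coe_mapAlgEquiv, Polynomial.map_X]
  have heC : ∀ a : ℂ, e (C a) = Polynomial.C (Polynomial.C a) := by
    intro a
    have h1 : (C a : MvPolynomial (Fin 2) ℂ) = algebraMap ℂ _ a := rfl
    rw [h1, AlgEquiv.commutes]
    rfl
  have heP : e ((X 1 : MvPolynomial (Fin 2) ℂ) ^ 2 - C (ε + ε⁻¹) * X 0 * X 1
      + X 0 ^ 2 + C (δ ^ 2)) = q := by
    simp only [map_add, map_sub, map_mul, map_pow, heX0, heX1, heC, hq, hA, hB,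
      Polynomial.C_neg, Polynomial.C_add, Polynomial.C_mul, Polynomial.C_pow]
    ring
  have hqmonic : q.Monic := by
    unfold q
    monicity!
  have hqdeg : q.natDegree = 2 := by
    unfold q
    compute_degree!
  have hirr : Irreducible q := by
    by_contra hni
    obtain ⟨c₁, c₂, hmul, hadd⟩ :=
      (hqmonic.not_irreducible_iff_exists_add_mul_eq_coeff hqdeg).mp hni
    have hc0 : q.coeff 0 = B := by
      simp [hq]
    have hc1 : q.coeff 1 = A := by
      simp [hq, Polynomial.coeff_X_pow]
    rw [hc0] at hmul
    rw [hc1] at hadd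
    set d : Polynomial ℂ := c₁ - c₂ with hd
    have hcsq : (ε + ε⁻¹) ^ 2 - 4 = δ ^ 2 := by
      rw [← hδdef]
      field_simp
      ring
    have hd2 : d ^ 2 = Polynomial.C (δ ^ 2) * Polynomial.X ^ 2 - Polynomial.C (4 * δ ^ 2) := by
      have step : d ^ 2 = A ^ 2 - 4 * B := by
        rw [hd]
        linear_combination (-(A + c₁ + c₂)) * hadd + 4 * hmul
      rw [step, hA, hB, ← hcsq]
      simp only [Polynomial.C_sub, Polynomial.C_mul, Polynomial.C_pow, map_ofNat]
      ring
    have hδ2 : δ ^ 2 ≠ 0 := pow_ne_zero 2 hδ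
    have hdne : d ≠ 0 := by
      intro h0
      rw [h0] at hd2
      have h00 := congrArg (Polynomial.eval 0) hd2
      simp only [Polynomial.eval_pow, Polynomial.eval_sub, Polynomial.eval_mul,
        Polynomial.eval_C, Polynomial.eval_X, Polynomial.eval_zero] at h00
      exact hδ2 (by linear_combination h00 / 4)
    have hdeg : d.natDegree ≤ 1 := by
      have h1 : (d ^ 2).natDegree = 2 * d.natDegree := Polynomial.natDegree_pow d 2
      have h2 : (Polynomial.C (δ ^ 2) * Polynomial.X ^ 2
          - Polynomial.C (4 * δ ^ 2)).natDegree = 2 := by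
        compute_degree!
      rw [hd2, h2] at h1
      omega
    have heval2 : d.eval 2 = 0 := by
      have h := congrArg (Polynomial.eval 2) hd2
      simp only [Polynomial.eval_pow, Polynomial.eval_sub, Polynomial.eval_mul,
        Polynomial.eval_C, Polynomial.eval_X] at h
      have h' : (d.eval 2) ^ 2 = 0 := by rw [h]; ring
      exact pow_eq_zero_iff (by norm_num) |>.mp h'
    have hevaln2 : d.eval (-2) = 0 := by
      have h := congrArg (Polynomial.eval (-2)) hd2
      simp only [Polynomial.eval_pow, Polynomial.eval_sub, Polynomial.eval_mul,
        Polynomial.eval_C, Polynomial.eval_X] at h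
      have h' : (d.eval (-2)) ^ 2 = 0 := by rw [h]; ring
      exact pow_eq_zero_iff (by norm_num) |>.mp h'
    have hdform := Polynomial.eq_X_add_C_of_natDegree_le_one hdeg
    rw [hdform] at heval2 hevaln2
    simp only [Polynomial.eval_add, Polynomial.eval_mul, Polynomial.eval_C,
      Polynomial.eval_X] at heval2 hevaln2
    have hc1z : d.coeff 1 = 0 := by linear_combination (heval2 - hevaln2) / 4
    have hc0z : d.coeff 0 = 0 := by linear_combination (heval2 + hevaln2) / 2
    have : d = 0 := by rw [hdform, hc1z, hc0z]; simp
    exact hdne this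
  have := (MulEquiv.irreducible_iff (e : MvPolynomial (Fin 2) ℂ ≃* Polynomial (Polynomial ℂ))).mp
    (heP ▸ hirr)
  exact this

theorem stmt6 (ε : ℂ) (hε : ∃ n : ℕ, 0 < n ∧ ε ^ n = 1) (h1 : ε ≠ 1) (h2 : ε ≠ -1) :
    Irreducible ((X 1 : MvPolynomial (Fin 2) ℂ) ^ 2 - C (ε + ε⁻¹) * X 0 * X 1
        + X 0 ^ 2 + C ((ε - ε⁻¹) ^ 2)) ∧
      {p : ℂ × ℂ | eval ![p.1, p.2] ((X 1 : MvPolynomial (Fin 2) ℂ) ^ 2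
          - C (ε + ε⁻¹) * X 0 * X 1 + X 0 ^ 2 + C ((ε - ε⁻¹) ^ 2)) = 0} =
        {p : ℂ × ℂ | ∃ z : ℂ, z ≠ 0 ∧ p = (z + z⁻¹, ε * z + (ε * z)⁻¹)} ∧
      {p : ℂ × ℂ | p.2 ^ 2 - (ε + ε⁻¹) * p.1 * p.2 + p.1 ^ 2 + (ε - ε⁻¹) ^ 2 = 0} =
        {p : ℂ × ℂ | ∃ z : ℂ, z ≠ 0 ∧ p = (z + z⁻¹, ε * z + (ε * z)⁻¹)} := by
  have hε0 : ε ≠ 0 := by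
    obtain ⟨n, hn, hpow⟩ := hε
    intro h
    rw [h, zero_pow hn.ne'] at hpow
    exact zero_ne_one hpow
  have hδ : ε - ε⁻¹ ≠ 0 := by
    intro h
    have h' : ε * ε - 1 = 0 := by
      have hu : ε * ε⁻¹ = 1 := mul_inv_cancel₀ hε0
      linear_combination ε * h + hu
    have hfac : (ε - 1) * (ε + 1) = 0 := by linear_combination h'
    rcases mul_eq_zero.mp hfac with h | h
    · exact h1 (by linear_combination h)
    · exact h2 (by linear_combination h)
  have hset := aux_sets ε hε0 hδ
  refine ⟨aux_irred ε hδ, ?_, hset⟩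
  rw [← hset]
  ext ⟨x, y⟩
  simp only [Set.mem_setOf_eq]
  constructor <;> intro h <;>
  · simp only [eval_add, eval_sub, eval_mul, eval_pow, eval_C, eval_X,
      Matrix.cons_val_zero, Matrix.cons_val_one, Matrix.head_cons] at h ⊢
    linear_combination h
end

section
/- Let h, φ ∈ ℂ[x] with deg h ≥ 2 and φ nonconstant, and let s, t ∈ ℂ with (s,t) ≠ (1,0) and s ≠ 0. Set p(x) = sx + t, and suppose φ∘p = φ and h∘p = p∘h. Then s ≠ 1; s is a primitive d-th root of unity for some integer d ≥ 2 with d dividing deg h − 1; and, setting l(x) = x + t/(1 − s), there exist polynomials P, Q ∈ ℂ[x] such that φ∘l = P∘P_d and (l⁻¹∘h∘l)(x) = x·Q(x^d). -/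
open Polynomial

private lemma comp_C_mul_X_coeff (p : Polynomial ℂ) (s : ℂ) (n : ℕ) :
    (p.comp (C s * X)).coeff n = s ^ n * p.coeff n := by
  induction p using Polynomial.induction_on' with
  | add p q hp hq => simp [add_comp, hp, hq, mul_add]
  | monomial k a =>
    rw [monomial_comp, mul_pow, ← C_pow, mul_left_comm, coeff_C_mul, coeff_C_mul,
      coeff_X_pow, coeff_monomial]
    rcases eq_or_ne n k with rfl | hnk
    · simp
    · simp [hnk, Ne.symm hnk]

private lemma contract_comp_X_pow (p : Polynomial ℂ) (d : ℕ) (hd : d ≠ 0)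
    (hp : ∀ n, ¬ d ∣ n → p.coeff n = 0) : (p.contract d).comp (X ^ d) = p := by
  ext n
  rw [← expand_eq_comp_X_pow, coeff_expand hd.bot_lt, coeff_contract hd]
  split_ifs with hdn
  · rw [Nat.div_mul_cancel hdn]
  · exact (hp n hdn).symm

theorem stmt9 (h φ : Polynomial ℂ) (hdeg : 2 ≤ h.natDegree) (hφ : 0 < φ.degree)
    (s t : ℂ) (hst : (s, t) ≠ (1, 0)) (hs : s ≠ 0)
    (hφp : φ.comp (C s * X + C t) = φ)
    (hhp : h.comp (C s * X + C t) = (C s * X + C t).comp h) :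
    s ≠ 1 ∧ ∃ d : ℕ, 2 ≤ d ∧ IsPrimitiveRoot s d ∧ d ∣ (h.natDegree - 1) ∧
      ∃ P Q : Polynomial ℂ,
        φ.comp (X + C (t / (1 - s))) = P.comp (X ^ d) ∧
        (X - C (t / (1 - s))).comp (h.comp (X + C (t / (1 - s)))) = X * Q.comp (X ^ d) := by
  have hφ0 : φ ≠ 0 := fun h0 => by simp [h0] at hφ
  have hφnd : 0 < φ.natDegree := natDegree_pos_iff_degree_pos.mpr hφ
  -- s ≠ 1
  have hs1 : s ≠ 1 := by
    rintro rfl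
    have ht : t ≠ 0 := by simpa using hst
    have hφt : φ.comp (X + C t) = φ := by simpa using hφp
    have hev : ∀ n : ℕ, φ.eval ((n : ℂ) * t) = φ.eval 0 := by
      intro n
      induction n with
      | zero => simp
      | succ k ih =>
        have := congrArg (eval ((k : ℂ) * t)) hφt
        rw [eval_comp] at this
        simp only [eval_add, eval_X, eval_C] at this
        rw [← ih, ← this]
        push_cast
        ring_nf
    have hroots : { x | IsRoot (φ - C (φ.eval 0)) x }.Infinite := by
      apply Set.Infinite.mono (s := Set.range fun n : ℕ => (n : ℂ) * t)
      · rintro x ⟨n, rfl⟩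
        show IsRoot _ _
        rw [IsRoot, eval_sub, eval_C, hev n, sub_self]
      · apply Set.infinite_range_of_injective
        intro a b hab
        have : (a : ℂ) = b := mul_right_cancel₀ ht hab
        exact_mod_cast this
    have hz := eq_zero_of_infinite_isRoot _ hroots
    have hφC : φ = C (φ.eval 0) := sub_eq_zero.mp hz
    rw [hφC] at hφ
    exact absurd (lt_of_lt_of_le hφ degree_C_le) (lt_irrefl 0)
  have h1s : (1 : ℂ) - s ≠ 0 := sub_ne_zero.mpr (Ne.symm hs1)
  set c : ℂ := t / (1 - s) with hc
  have hsc : s * c + t = c := by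
    rw [hc, eq_div_iff h1s, add_mul, mul_assoc, div_mul_cancel₀ _ h1s]
    ring
  have hscC : C s * C c + C t = C c := by rw [← C_mul, ← C_add, hsc]
  -- conjugated polynomials
  set ψ : Polynomial ℂ := φ.comp (X + C c) with hψdef
  have hkey : (C s * X + C t).comp (X + C c) = (X + C c).comp (C s * X) := by
    simp only [add_comp, mul_comp, C_comp, X_comp]
    linear_combination hscC
  have hψ : ψ.comp (C s * X) = ψ := by
    rw [hψdef, comp_assoc, ← hkey, ← comp_assoc, hφp]
  have hψcoeff : ∀ n : ℕ, s ^ n * ψ.coeff n = ψ.coeff n := by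
    intro n
    conv_rhs => rw [← hψ]
    rw [_root_.comp_C_mul_X_coeff]
  have hψnd : ψ.natDegree = φ.natDegree := by
    rw [hψdef, natDegree_comp]
    simp
  have hψ0 : ψ ≠ 0 := by
    intro h0
    rw [h0, natDegree_zero] at hψnd
    omega
  -- s is a root of unity
  have hsN : s ^ ψ.natDegree = 1 := by
    have := hψcoeff ψ.natDegree
    rw [coeff_natDegree] at this
    exact mul_right_cancel₀ (leadingCoeff_ne_zero.mpr hψ0) (by simpa using this)
  have hfin : IsOfFinOrder s := isOfFinOrder_iff_pow_eq_one.mpr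
    ⟨ψ.natDegree, by omega, hsN⟩
  set d : ℕ := orderOf s with hd
  have hprim : IsPrimitiveRoot s d := IsPrimitiveRoot.orderOf s
  have hd0 : 0 < d := hfin.orderOf_pos
  have hd2 : 2 ≤ d := by
    rcases Nat.lt_or_ge d 2 with h2 | h2
    · have h1 : d = 1 := by omega
      have : orderOf s = 1 := by rw [← hd, h1]
      exact absurd (orderOf_eq_one_iff.mp this) hs1
    · exact h2
  have hdvd_iff : ∀ n : ℕ, s ^ n = 1 ↔ d ∣ n := fun n =>
    ⟨fun hn => orderOf_dvd_of_pow_eq_one hn, fun hn => orderOf_dvd_iff_pow_eq_one.mp hn⟩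
  -- H : conjugated h
  set H : Polynomial ℂ := h.comp (X + C c) - C c with hHdef
  have hH : H.comp (C s * X) = C s * H := by
    rw [hHdef, sub_comp, C_comp, comp_assoc, ← hkey, ← comp_assoc, hhp]
    simp only [add_comp, mul_comp, C_comp, X_comp]
    linear_combination hscC
  have hHcoeff : ∀ n : ℕ, s ^ n * H.coeff n = s * H.coeff n := by
    intro n
    have := congrArg (fun p => Polynomial.coeff p n) hH
    simp only [coeff_C_mul] at this
    rw [_root_.comp_C_mul_X_coeff] at this
    exact this
  have hHc : ∀ n : ℕ, H.coeff n ≠ 0 → s ^ n = s := by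
    intro n hn
    exact mul_right_cancel₀ hn (hHcoeff n)
  have hH0 : H.coeff 0 = 0 := by
    by_contra h0
    have := hHc 0 h0
    simp at this
    exact hs1 this.symm
  have hHnd : H.natDegree = h.natDegree := by
    rw [hHdef, natDegree_sub_C, natDegree_comp]; simp
  have hHne : H ≠ 0 := by
    intro h0
    rw [h0, natDegree_zero] at hHnd
    omega
  -- d ∣ h.natDegree - 1
  have hdvdN : d ∣ h.natDegree - 1 := by
    have hlc : H.coeff H.natDegree ≠ 0 := by
      rw [coeff_natDegree]; exact leadingCoeff_ne_zero.mpr hHne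
    have h1 : s ^ H.natDegree = s := hHc _ hlc
    have h2 : s ^ (H.natDegree - 1) = 1 := by
      have hpos : 1 ≤ H.natDegree := by omega
      have : s ^ (H.natDegree - 1) * s = 1 * s := by
        rw [← pow_succ, Nat.sub_add_cancel hpos, h1, one_mul]
      exact mul_right_cancel₀ hs this
    rw [← hHnd]
    exact (hdvd_iff _).mp h2
  refine ⟨hs1, d, hd2, hprim, hdvdN, ψ.contract d, H.divX.contract d, ?_, ?_⟩
  · refine (contract_comp_X_pow ψ d (by omega) ?_).symm
    intro n hn
    by_contra hne
    have h1 : s ^ n * ψ.coeff n = 1 * ψ.coeff n := by rw [one_mul]; exact hψcoeff n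
    exact hn ((hdvd_iff n).mp (mul_right_cancel₀ hne h1))
  · have hQdvd : ∀ n, ¬ d ∣ n → H.divX.coeff n = 0 := by
      intro n hn
      by_contra hne
      rw [coeff_divX] at hne
      have h1 := hHc (n + 1) hne
      have h2 : s ^ n = 1 := by
        have : s ^ n * s = 1 * s := by rw [← pow_succ, h1, one_mul]
        exact mul_right_cancel₀ hs this
      exact hn ((hdvd_iff n).mp h2)
    have hXc : (X - C c).comp (h.comp (X + C c)) = H := by
      rw [sub_comp, X_comp, C_comp, hHdef]
    rw [hXc, contract_comp_X_pow H.divX d (by omega) hQdvd]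
    conv_lhs => rw [← divX_mul_X_add H, hH0]
    simp [mul_comm]
end

section
/- Let d ≥ 2 be an integer, let ε ∈ ℂ be a primitive d-th root of unity, and let φ ∈ ℂ[x] satisfy φ(εz + (εz)⁻¹) = φ(z + z⁻¹) for all z ∈ ℂ∖{0}. Then there exists a polynomial P ∈ ℂ[x] such that φ = P∘T_d; moreover, if φ is nonconstant then d divides deg φ. -/
open Polynomial

lemma coeff_comp_CmulX (p : Polynomial ℂ) (a : ℂ) (j : ℕ) :
    (p.comp (C a * X)).coeff j = a ^ j * p.coeff j := by
  induction p using Polynomial.induction_on' with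
  | add p q hp hq => simp [add_comp, hp, hq, mul_add]
  | monomial k c =>
    rw [← C_mul_X_pow_eq_monomial, mul_comp, C_comp, pow_comp, X_comp, mul_pow, ← C_pow,
      ← mul_assoc, ← C_mul, coeff_C_mul_X_pow, coeff_C_mul_X_pow]
    split_ifs with h
    · subst h; ring
    · ring

lemma lift_poly (p : Polynomial ℂ) (N : ℕ) (hN : p.natDegree ≤ N) :
    ∃ F : Polynomial ℂ,
      (∀ z : ℂ, z ≠ 0 → F.eval z = z ^ N * p.eval (z + z⁻¹)) ∧
      F.coeff (N + p.natDegree) = p.leadingCoeff ∧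
      F.natDegree ≤ N + p.natDegree := by
  have hm2 : (X ^ 2 + C 1 : Polynomial ℂ).Monic := by
    apply monic_X_pow_add
    exact lt_of_le_of_lt degree_C_le (by norm_num)
  have hmon : ∀ k : ℕ, k ≤ N → (X ^ (N - k) * (X ^ 2 + C 1) ^ k : Polynomial ℂ).Monic ∧
      (X ^ (N - k) * (X ^ 2 + C 1) ^ k : Polynomial ℂ).natDegree = N + k := by
    intro k hk
    have hm : (X ^ (N - k) * (X ^ 2 + C 1) ^ k : Polynomial ℂ).Monic :=
      (monic_X_pow _).mul (hm2.pow k)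
    refine ⟨hm, ?_⟩
    rw [natDegree_mul (monic_X_pow _).ne_zero (hm2.pow k).ne_zero, natDegree_X_pow,
      hm2.natDegree_pow, natDegree_X_pow_add_C]
    omega
  refine ⟨∑ k ∈ p.support, C (p.coeff k) * (X ^ (N - k) * (X ^ 2 + C 1) ^ k), ?_, ?_, ?_⟩
  · intro z hz
    rw [eval_finset_sum, eval_eq_sum, Polynomial.sum, Finset.mul_sum]
    refine Finset.sum_congr rfl fun k hk => ?_
    have hkN : k ≤ N := (le_natDegree_of_mem_supp k hk).trans hN
    have h1 : z + z⁻¹ = (z ^ 2 + 1) / z := by field_simp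
    have h2 : z ^ (N - k) * z ^ k = z ^ N := by rw [← pow_add, Nat.sub_add_cancel hkN]
    simp only [eval_mul, eval_pow, eval_add, eval_C, eval_X, eval_one]
    rw [h1, div_pow]
    field_simp
    linear_combination p.coeff k * (z ^ 2 + 1) ^ k * h2
  · rw [finset_sum_coeff]
    rw [show p.leadingCoeff = p.coeff p.natDegree from rfl]
    have hsum : ∑ k ∈ p.support, (C (p.coeff k) * (X ^ (N - k) * (X ^ 2 + C 1) ^ k)).coeff
          (N + p.natDegree)
        = (C (p.coeff p.natDegree) *
            (X ^ (N - p.natDegree) * (X ^ 2 + C 1) ^ p.natDegree)).coeff (N + p.natDegree) := by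
      apply Finset.sum_eq_single p.natDegree
      · intro k hk hne
        have hkn : k ≤ p.natDegree := le_natDegree_of_mem_supp k hk
        have hkN : k ≤ N := hkn.trans hN
        obtain ⟨hm, hdeg⟩ := hmon k hkN
        have h0 : (X ^ (N - k) * (X ^ 2 + C 1) ^ k : Polynomial ℂ).coeff (N + p.natDegree) = 0 :=
          coeff_eq_zero_of_natDegree_lt (by rw [hdeg]; omega)
        rw [coeff_C_mul, h0, mul_zero]
      · intro h
        simp [notMem_support_iff.mp h]
    rw [hsum]
    obtain ⟨hm, hdeg⟩ := hmon p.natDegree hN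
    rw [coeff_C_mul, ← hdeg, hm.coeff_natDegree, mul_one]
  · apply natDegree_sum_le_of_forall_le
    intro k hk
    have hkn : k ≤ p.natDegree := le_natDegree_of_mem_supp k hk
    obtain ⟨hm, hdeg⟩ := hmon k (hkn.trans hN)
    refine natDegree_mul_le.trans ?_
    rw [natDegree_C, hdeg]
    omega

lemma Td_monic (d : ℕ) (hd : 2 ≤ d) (Td : Polynomial ℂ)
    (hTd : ∀ z : ℂ, z ≠ 0 → Td.eval (z + z⁻¹) = z ^ d + z⁻¹ ^ d) :
    Td.Monic ∧ Td.natDegree = d := by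
  set m := Td.natDegree with hm
  obtain ⟨F, hFe, hFc, hFd⟩ := lift_poly Td (m + d) (by omega)
  rw [← hm] at hFc hFd
  have hFG : F = X ^ (m + d + d) + X ^ m := by
    apply eq_of_infinite_eval_eq
    refine ((Set.finite_singleton (0:ℂ)).infinite_compl).mono ?_
    intro z hz
    have hz' : (z:ℂ) ≠ 0 := hz
    show eval z F = eval z (X ^ (m + d + d) + X ^ m)
    rw [hFe z hz', hTd z hz']
    have h1 : z ^ (m + d) * z⁻¹ ^ d = z ^ m := by
      rw [inv_pow, pow_add]
      field_simp
    simp only [eval_add, eval_pow, eval_X]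
    rw [mul_add, ← pow_add, h1]
  have hGc : ∀ j, (X ^ (m + d + d) + X ^ m : Polynomial ℂ).coeff j
      = (if j = m + d + d then 1 else 0) + (if j = m then 1 else 0) := by
    intro j; simp [coeff_add, coeff_X_pow]
  have hd_le : d ≤ m := by
    by_contra h
    have h1 : F.coeff (m + d + d) = 1 := by
      rw [hFG, hGc, if_pos rfl, if_neg (by omega)]; ring
    have h2 : F.coeff (m + d + d) = 0 :=
      coeff_eq_zero_of_natDegree_lt (lt_of_le_of_lt hFd (by omega))
    rw [h1] at h2
    exact one_ne_zero h2
  have hl : Td.leadingCoeff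
      = (if m + d + m = m + d + d then 1 else 0) + (if m + d + m = m then 1 else 0) := by
    rw [← hFc, hFG, hGc]
  by_cases hmd : m = d
  · refine ⟨?_, hmd⟩
    show Td.leadingCoeff = 1
    rw [hl, if_pos (by omega), if_neg (by omega)]; ring
  · exfalso
    have h0 : Td.leadingCoeff = 0 := by
      rw [hl, if_neg (by omega), if_neg (by omega)]; ring
    have hTd0 : Td = 0 := leadingCoeff_eq_zero.mp h0
    have : m = 0 := by rw [hm, hTd0, natDegree_zero]
    omega

lemma dvd_natDegree (d : ℕ) (hd : 2 ≤ d) (ε : ℂ) (hε : IsPrimitiveRoot ε d)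
    (φ : Polynomial ℂ) (hn : 0 < φ.natDegree)
    (hφ : ∀ z : ℂ, z ≠ 0 → φ.eval (ε * z + (ε * z)⁻¹) = φ.eval (z + z⁻¹)) :
    d ∣ φ.natDegree := by
  set n := φ.natDegree with hn'
  obtain ⟨F, hFe, hFc, hFd⟩ := lift_poly φ n le_rfl
  rw [← hn'] at hFc
  have hε0 : ε ≠ 0 := hε.ne_zero (by omega)
  have key : F.comp (C ε * X) = C (ε ^ n) * F := by
    apply eq_of_infinite_eval_eq
    refine ((Set.finite_singleton (0:ℂ)).infinite_compl).mono ?_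
    intro z hz
    have hz' : (z:ℂ) ≠ 0 := hz
    show eval z (F.comp (C ε * X)) = eval z (C (ε ^ n) * F)
    rw [eval_comp, eval_mul, eval_C, eval_X, eval_mul, eval_C]
    rw [hFe (ε * z) (mul_ne_zero hε0 hz'), hφ z hz', hFe z hz', mul_pow]
    ring
  have hco := congrArg (fun q : Polynomial ℂ => q.coeff (n + n)) key
  rw [coeff_comp_CmulX, coeff_C_mul, hFc] at hco
  have hlc : φ.leadingCoeff ≠ 0 := by
    rw [Ne, leadingCoeff_eq_zero]
    intro h
    rw [h] at hn'
    simp [hn'] at hn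
  have hpow : ε ^ (n + n) = ε ^ n := mul_right_cancel₀ hlc hco
  have hne : ε ^ n ≠ 0 := pow_ne_zero _ hε0
  have h1 : ε ^ n = 1 := by
    have h2 : ε ^ n * ε ^ n = ε ^ n * 1 := by rw [mul_one, ← pow_add]; exact hpow
    exact mul_left_cancel₀ hne h2
  exact (hε.pow_eq_one_iff_dvd n).mp h1

lemma main_aux (d : ℕ) (hd : 2 ≤ d) (ε : ℂ) (hε : IsPrimitiveRoot ε d)
    (Td : Polynomial ℂ)
    (hTd : ∀ z : ℂ, z ≠ 0 → Td.eval (z + z⁻¹) = z ^ d + z⁻¹ ^ d) :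
    ∀ n : ℕ, ∀ φ : Polynomial ℂ, φ.natDegree ≤ n →
      (∀ z : ℂ, z ≠ 0 → φ.eval (ε * z + (ε * z)⁻¹) = φ.eval (z + z⁻¹)) →
      ∃ P : Polynomial ℂ, φ = P.comp Td := by
  intro n
  induction n with
  | zero =>
    intro φ hφn _
    have h0 : φ.natDegree = 0 := Nat.le_zero.mp hφn
    exact ⟨C (φ.coeff 0), by rw [C_comp]; exact eq_C_of_natDegree_eq_zero h0⟩
  | succ n ih =>
    intro φ hφn hinv
    by_cases h0 : φ.natDegree = 0
    · exact ⟨C (φ.coeff 0), by rw [C_comp]; exact eq_C_of_natDegree_eq_zero h0⟩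
    · obtain ⟨hTm, hTdeg⟩ := Td_monic d hd Td hTd
      have hε0 : ε ≠ 0 := hε.ne_zero (by omega)
      have hdvd : d ∣ φ.natDegree := dvd_natDegree d hd ε hε φ (Nat.pos_of_ne_zero h0) hinv
      obtain ⟨m, hm⟩ := hdvd
      have hne : φ ≠ 0 := fun h => h0 (by simp [h])
      have ha : φ.leadingCoeff ≠ 0 := leadingCoeff_ne_zero.mpr hne
      set a := φ.leadingCoeff with ha'
      set ψ := φ - C a * Td ^ m with hψ
      have hCa : (C a : Polynomial ℂ) ≠ 0 := by simpa using ha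
      have hTdm_ne : (C a * Td ^ m : Polynomial ℂ) ≠ 0 := mul_ne_zero hCa (hTm.pow m).ne_zero
      have hTdm_deg : (C a * Td ^ m).natDegree = φ.natDegree := by
        rw [natDegree_C_mul ha, hTm.natDegree_pow, hTdeg, hm]; ring
      have hlc : (C a * Td ^ m).leadingCoeff = a := by
        rw [leadingCoeff_mul, leadingCoeff_C, (hTm.pow m).leadingCoeff, mul_one]
      have hdegeq : φ.degree = (C a * Td ^ m).degree := by
        rw [degree_eq_natDegree hne, degree_eq_natDegree hTdm_ne, hTdm_deg]
      have hlt : ψ.degree < φ.degree := degree_sub_lt hdegeq hne (by rw [hlc])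
      have hψn : ψ.natDegree ≤ n := by
        by_cases hψ0 : ψ = 0
        · simp [hψ0]
        · have := natDegree_lt_natDegree hψ0 hlt
          omega
      have hψinv : ∀ z : ℂ, z ≠ 0 → ψ.eval (ε * z + (ε * z)⁻¹) = ψ.eval (z + z⁻¹) := by
        intro z hz
        have hεz : ε * z ≠ 0 := mul_ne_zero hε0 hz
        have hTinv : Td.eval (ε * z + (ε * z)⁻¹) = Td.eval (z + z⁻¹) := by
          rw [hTd _ hεz, hTd _ hz]
          simp [mul_pow, mul_inv, inv_pow, hε.pow_eq_one]
        simp only [hψ, eval_sub, eval_mul, eval_pow, eval_C, hTinv, hinv z hz]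
      obtain ⟨Q, hQ⟩ := ih ψ hψn hψinv
      refine ⟨Q + C a * X ^ m, ?_⟩
      rw [add_comp, mul_comp, C_comp, pow_comp, X_comp, ← hQ, hψ]
      ring

theorem stmt11 (d : ℕ) (hd : 2 ≤ d) (ε : ℂ) (hε : IsPrimitiveRoot ε d)
    (Td : Polynomial ℂ)
    (hTd : ∀ z : ℂ, z ≠ 0 → Td.eval (z + z⁻¹) = z ^ d + z⁻¹ ^ d)
    (φ : Polynomial ℂ)
    (hφ : ∀ z : ℂ, z ≠ 0 → φ.eval (ε * z + (ε * z)⁻¹) = φ.eval (z + z⁻¹)) :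
    ∃ P : Polynomial ℂ, φ = P.comp Td ∧ (0 < φ.degree → (d : ℕ) ∣ φ.natDegree) := by
  obtain ⟨P, hP⟩ := main_aux d hd ε hε Td hTd φ.natDegree φ le_rfl hφ
  exact ⟨P, hP, fun hdeg =>
    dvd_natDegree d hd ε hε φ (natDegree_pos_iff_degree_pos.mpr hdeg) hφ⟩
end

section
/- Let d ≥ 2 and r ≥ 2 be integers, let ε ∈ ℂ be a primitive d-th root of unity with ε^r = ε or ε^r = ε⁻¹, let σ ∈ {1, −1}, u ∈ ℂ∖{0}, v ∈ ℂ, and set l(x) = ux + v. Let h₁ = l∘(σ·T_r)∘l⁻¹ ∈ ℂ[x]. Then the conic C_{ε,u,v} is invariant under the coordinatewise map (h₁, h₁): for every (x,y) ∈ C_{ε,u,v}, also (h₁(x), h₁(y)) ∈ C_{ε,u,v}. -/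
open Polynomial

/-- The conic `C_{ε,u,v}`. -/
def conicSet (ε u v : ℂ) : Set (ℂ × ℂ) :=
  {p | p.2 ^ 2 + (ε + ε⁻¹ - 2) * v * (p.1 + p.2) - (ε + ε⁻¹) * p.1 * p.2
    + p.1 ^ 2 + (2 - ε - ε⁻¹) * v ^ 2 + (ε - ε⁻¹) ^ 2 * u ^ 2 = 0}

private lemma normEq (ε u v A B : ℂ)
    (h : A ^ 2 + B ^ 2 - (ε + ε⁻¹) * A * B + (ε - ε⁻¹) ^ 2 = 0) :
    (u * A + v, u * B + v) ∈ conicSet ε u v := by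
  simp only [conicSet, Set.mem_setOf_eq]
  linear_combination u ^ 2 * h

private lemma param (ε w : ℂ) (hε : ε ≠ 0) (hw : w ≠ 0) :
    (w + w⁻¹) ^ 2 + (ε * w + ε⁻¹ * w⁻¹) ^ 2
      - (ε + ε⁻¹) * (w + w⁻¹) * (ε * w + ε⁻¹ * w⁻¹) + (ε - ε⁻¹) ^ 2 = 0 := by
  field_simp
  ring

private lemma param' (ε w : ℂ) (hε : ε ≠ 0) (hw : w ≠ 0) :
    (w + w⁻¹) ^ 2 + (ε⁻¹ * w + ε * w⁻¹) ^ 2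
      - (ε + ε⁻¹) * (w + w⁻¹) * (ε⁻¹ * w + ε * w⁻¹) + (ε - ε⁻¹) ^ 2 = 0 := by
  field_simp
  ring

theorem stmt16
    (T : ℕ → Polynomial ℂ)
    (hT : ∀ (r : ℕ) (z : ℂ), z ≠ 0 → (T r).eval (z + z⁻¹) = z ^ r + z⁻¹ ^ r)
    (d r : ℕ) (hd : 2 ≤ d) (hr : 2 ≤ r)
    (ε : ℂ) (hε : IsPrimitiveRoot ε d) (hεr : ε ^ r = ε ∨ ε ^ r = ε⁻¹)
    (σ : ℂ) (hσ : σ = 1 ∨ σ = -1)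
    (u : ℂ) (hu : u ≠ 0) (v : ℂ)
    (h₁ : Polynomial ℂ)
    (hh₁ : h₁ = (C u * X + C v).comp ((C σ * T r).comp (C u⁻¹ * (X - C v)))) :
    ∀ p ∈ conicSet ε u v, (h₁.eval p.1, h₁.eval p.2) ∈ conicSet ε u v := by
  intro p hp
  have hε0 : ε ≠ 0 := hε.ne_zero (by omega)
  have hσ0 : σ ≠ 0 := by rcases hσ with h | h <;> simp [h]
  have hσ2 : σ⁻¹ = σ := by rcases hσ with h | h <;> norm_num [h]
  have heval : ∀ x : ℂ, h₁.eval x = u * (σ * (T r).eval (u⁻¹ * (x - v))) + v := by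
    intro x
    simp [hh₁, eval_comp]
  set a := u⁻¹ * (p.1 - v) with hadef
  set b := u⁻¹ * (p.2 - v) with hbdef
  have hx : p.1 = u * a + v := by rw [hadef, ← mul_assoc, mul_inv_cancel₀ hu]; ring
  have hy : p.2 = u * b + v := by rw [hbdef, ← mul_assoc, mul_inv_cancel₀ hu]; ring
  have hN : a ^ 2 + b ^ 2 - (ε + ε⁻¹) * a * b + (ε - ε⁻¹) ^ 2 = 0 := by
    have h := hp
    simp only [conicSet, Set.mem_setOf_eq] at h
    rw [hx, hy] at h
    have h2 : u ^ 2 * (a ^ 2 + b ^ 2 - (ε + ε⁻¹) * a * b + (ε - ε⁻¹) ^ 2) = 0 := by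
      linear_combination h
    exact (mul_eq_zero.mp h2).resolve_left (pow_ne_zero _ hu)
  obtain ⟨q, hq⟩ := IsAlgClosed.exists_pow_nat_eq (k := ℂ) (a ^ 2 - 4) (n := 2) (by norm_num)
  set z := (a + q) / 2 with hzdef
  have hz1 : z * ((a - q) / 2) = 1 := by
    rw [hzdef]; linear_combination (-(1:ℂ)/4) * hq
  have hz0 : z ≠ 0 := left_ne_zero_of_mul_eq_one hz1
  have hzinv : z⁻¹ = (a - q) / 2 := inv_eq_of_mul_eq_one_right hz1
  have hza : z + z⁻¹ = a := by rw [hzinv, hzdef]; ring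
  have hfac : (b - (ε * z + ε⁻¹ * z⁻¹)) * (b - (ε⁻¹ * z + ε * z⁻¹)) = 0 := by
    have key : (b - (ε * z + ε⁻¹ * z⁻¹)) * (b - (ε⁻¹ * z + ε * z⁻¹))
        = a ^ 2 + b ^ 2 - (ε + ε⁻¹) * a * b + (ε - ε⁻¹) ^ 2 := by
      rw [← hza]
      field_simp
      ring
    rw [key, hN]
  have hTa : (T r).eval a = z ^ r + (z ^ r)⁻¹ := by
    rw [← hza, hT r z hz0, inv_pow]
  have hw0 : σ * z ^ r ≠ 0 := mul_ne_zero hσ0 (pow_ne_zero _ hz0)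
  have hwinv : (σ * z ^ r)⁻¹ = σ * (z ^ r)⁻¹ := by rw [mul_inv, hσ2, mul_comm]
  have e1 : h₁.eval p.1 = u * ((σ * z ^ r) + (σ * z ^ r)⁻¹) + v := by
    rw [heval, ← hadef, hTa, hwinv]; ring
  rcases mul_eq_zero.mp hfac with h | h
  · have hb : b = ε * z + (ε * z)⁻¹ := by
      rw [sub_eq_zero.mp h, mul_inv]
    have hTb : (T r).eval b = ε ^ r * z ^ r + (ε ^ r)⁻¹ * (z ^ r)⁻¹ := by
      rw [hb, hT r (ε * z) (mul_ne_zero hε0 hz0), inv_pow, mul_pow, mul_inv]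
    rcases hεr with hc | hc
    · have e2 : h₁.eval p.2 = u * (ε * (σ * z ^ r) + ε⁻¹ * (σ * z ^ r)⁻¹) + v := by
        rw [heval, ← hbdef, hTb, hc, hwinv]; ring
      rw [e1, e2]
      exact normEq _ _ _ _ _ (param ε _ hε0 hw0)
    · have e2 : h₁.eval p.2 = u * (ε⁻¹ * (σ * z ^ r) + ε * (σ * z ^ r)⁻¹) + v := by
        rw [heval, ← hbdef, hTb, hc, inv_inv, hwinv]; ring
      rw [e1, e2]
      exact normEq _ _ _ _ _ (param' ε _ hε0 hw0)
  · have hb : b = ε⁻¹ * z + (ε⁻¹ * z)⁻¹ := by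
      rw [sub_eq_zero.mp h, mul_inv, inv_inv]
    have hTb : (T r).eval b = (ε ^ r)⁻¹ * z ^ r + ε ^ r * (z ^ r)⁻¹ := by
      rw [hb, hT r (ε⁻¹ * z) (mul_ne_zero (inv_ne_zero hε0) hz0), inv_pow, mul_pow,
        mul_inv, inv_pow, inv_inv]
    rcases hεr with hc | hc
    · have e2 : h₁.eval p.2 = u * (ε⁻¹ * (σ * z ^ r) + ε * (σ * z ^ r)⁻¹) + v := by
        rw [heval, ← hbdef, hTb, hc, hwinv]; ring
      rw [e1, e2]
      exact normEq _ _ _ _ _ (param' ε _ hε0 hw0)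
    · have e2 : h₁.eval p.2 = u * (ε * (σ * z ^ r) + ε⁻¹ * (σ * z ^ r)⁻¹) + v := by
        rw [heval, ← hbdef, hTb, hc, inv_inv, hwinv]; ring
      rw [e1, e2]
      exact normEq _ _ _ _ _ (param ε _ hε0 hw0)
end

section
/- Let d ≥ 2 be an integer, ε ∈ ℂ a primitive d-th root of unity, u ∈ ℂ∖{0}, v ∈ ℂ, and set l(x) = ux + v. Let h₂, P ∈ ℂ[x] satisfy h₂∘l = P∘T_d. Then h₂ collapses the conic C_{ε,u,v} to the diagonal: for every (x,y) ∈ C_{ε,u,v} one has h₂(x) = h₂(y). -/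
open Polynomial

theorem stmt17
    (T : ℕ → Polynomial ℂ)
    (hT : ∀ (r : ℕ) (z : ℂ), z ≠ 0 → (T r).eval (z + z⁻¹) = z ^ r + z⁻¹ ^ r)
    (d : ℕ) (hd : 2 ≤ d) (ε : ℂ) (hε : IsPrimitiveRoot ε d)
    (u : ℂ) (hu : u ≠ 0) (v : ℂ)
    (h₂ P : Polynomial ℂ)
    (hP : h₂.comp (C u * X + C v) = P.comp (T d)) :
    ∀ p ∈ conicSet ε u v, h₂.eval p.1 = h₂.eval p.2 := by
  intro p hp
  have hd0 : d ≠ 0 := by omega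
  have hε0 : ε ≠ 0 := hε.ne_zero hd0
  have he : ε * ε⁻¹ = 1 := mul_inv_cancel₀ hε0
  obtain ⟨a, ha⟩ : ∃ a : ℂ, a = (p.1 - v) / u := ⟨_, rfl⟩
  obtain ⟨b, hb⟩ : ∃ b : ℂ, b = (p.2 - v) / u := ⟨_, rfl⟩
  have hx : p.1 = u * a + v := by rw [ha]; field_simp; ring
  have hy : p.2 = u * b + v := by rw [hb]; field_simp; ring
  have hmem : p.2 ^ 2 + (ε + ε⁻¹ - 2) * v * (p.1 + p.2) - (ε + ε⁻¹) * p.1 * p.2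
      + p.1 ^ 2 + (2 - ε - ε⁻¹) * v ^ 2 + (ε - ε⁻¹) ^ 2 * u ^ 2 = 0 := hp
  rw [hx, hy] at hmem
  have key : b ^ 2 - (ε + ε⁻¹) * a * b + a ^ 2 + (ε - ε⁻¹) ^ 2 = 0 := by
    have h2 : u ^ 2 * (b ^ 2 - (ε + ε⁻¹) * a * b + a ^ 2 + (ε - ε⁻¹) ^ 2) = 0 := by
      linear_combination hmem
    exact (mul_eq_zero.mp h2).resolve_left (pow_ne_zero 2 hu)
  obtain ⟨z, hz0, hza, hzb⟩ :
      ∃ z : ℂ, z ≠ 0 ∧ a = z + z⁻¹ ∧ b = ε * z + ε⁻¹ * z⁻¹ := by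
    by_cases hcase : ε = ε⁻¹
    · have hε2 : ε ^ 2 = 1 := by rw [pow_two]; nth_rewrite 2 [hcase]; exact he
      have hεm : ε = -1 := by
        have h1 : ε ≠ 1 := hε.ne_one (by omega)
        have hfac : (ε - 1) * (ε + 1) = 0 := by linear_combination hε2
        rcases mul_eq_zero.mp hfac with h | h
        · exact absurd (sub_eq_zero.mp h) h1
        · exact eq_neg_of_add_eq_zero_left h
      have hεinv : ε⁻¹ = -1 := by rw [hεm]; norm_num
      have hba : b = -a := by
        have hsq : (a + b) ^ 2 = 0 := by
          rw [hεinv, hεm] at key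
          linear_combination key
        have h0 : a + b = 0 := sq_eq_zero_iff.mp hsq
        linear_combination h0
      obtain ⟨s, hs⟩ := IsAlgClosed.exists_pow_nat_eq (a ^ 2 - 4) (n := 2) (by norm_num)
      have hinv : (a + s) / 2 * ((a - s) / 2) = 1 := by
        rw [div_mul_div_comm, div_eq_one_iff_eq (by norm_num)]
        linear_combination -hs
      refine ⟨(a + s) / 2, left_ne_zero_of_mul_eq_one hinv, ?_, ?_⟩
      · rw [inv_eq_of_mul_eq_one_right hinv]
        ring
      · rw [inv_eq_of_mul_eq_one_right hinv, hba, hεinv, hεm]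
        ring
    · have hne : ε - ε⁻¹ ≠ 0 := sub_ne_zero.mpr hcase
      have hne' : ε⁻¹ - ε ≠ 0 := fun h => hne (by linear_combination -h)
      have hzw : (b - ε⁻¹ * a) / (ε - ε⁻¹) * ((b - ε * a) / (ε⁻¹ - ε)) = 1 := by
        rw [div_mul_div_comm, div_eq_one_iff_eq (mul_ne_zero hne hne')]
        linear_combination key + a ^ 2 * he
      refine ⟨(b - ε⁻¹ * a) / (ε - ε⁻¹), left_ne_zero_of_mul_eq_one hzw, ?_, ?_⟩
      · rw [inv_eq_of_mul_eq_one_right hzw, div_add_div _ _ hne hne',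
          eq_div_iff (mul_ne_zero hne hne')]
        ring
      · rw [inv_eq_of_mul_eq_one_right hzw, ← mul_div_assoc, ← mul_div_assoc,
          div_add_div _ _ hne hne', eq_div_iff (mul_ne_zero hne hne')]
        ring
  have e1 : h₂.eval p.1 = P.eval ((T d).eval a) := by
    have := congrArg (Polynomial.eval a) hP
    simp only [eval_comp, eval_add, eval_mul, eval_C, eval_X] at this
    rw [hx]; exact this
  have e2 : h₂.eval p.2 = P.eval ((T d).eval b) := by
    have := congrArg (Polynomial.eval b) hP
    simp only [eval_comp, eval_add, eval_mul, eval_C, eval_X] at this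
    rw [hy]; exact this
  have hTa : (T d).eval a = z ^ d + z⁻¹ ^ d := by rw [hza]; exact hT d z hz0
  have hTb : (T d).eval b = z ^ d + z⁻¹ ^ d := by
    have hb' : b = ε * z + (ε * z)⁻¹ := by rw [hzb, mul_inv]
    rw [hb', hT d (ε * z) (mul_ne_zero hε0 hz0), mul_pow, mul_inv, mul_pow,
      hε.pow_eq_one, inv_pow, hε.pow_eq_one, inv_one, one_mul, one_mul]
  rw [e1, e2, hTa, hTb]
end

section
/- Let K be a number field regarded as a subfield of ℂ, let d > 2 and let r ≥ 2 be an EVEN integer, let ε ∈ ℂ be a primitive d-th root of unity, σ ∈ {1,−1}, u ∈ ℂ∖{0}, v ∈ ℂ, and set l(x) = ux + v. Suppose the polynomial h₁ = l∘(σ·T_r)∘l⁻¹ has all of its coefficients in K. Then: (i) if the conic C_{ε,u,v} contains infinitely many points of K × K, then u ∈ K, v ∈ K and ε + ε⁻¹ ∈ K; and (ii) conversely, if u, v, ε + ε⁻¹ ∈ K, then the point (2u + v, u(ε + ε⁻¹) + v) is a K-point of C_{ε,u,v}, and C_{ε,u,v} contains infinitely many points of K × K. -/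
open Polynomial

lemma exists_add_inv (w : ℂ) : ∃ z : ℂ, z ≠ 0 ∧ z + z⁻¹ = w := by
  have hdeg : (X ^ 2 - C w * X + 1 : ℂ[X]).degree = 2 := by
    compute_degree!
  obtain ⟨z, hz⟩ := Complex.exists_root (f := X ^ 2 - C w * X + 1) (by rw [hdeg]; norm_num)
  have hz' : z ^ 2 - w * z + 1 = 0 := by simpa [IsRoot] using hz
  have hz0 : z ≠ 0 := by rintro rfl; simp at hz'
  refine ⟨z, hz0, ?_⟩
  field_simp
  linear_combination hz'

lemma poly_ext {p q : ℂ[X]} (h : ∀ z : ℂ, z ≠ 0 → p.eval (z + z⁻¹) = q.eval (z + z⁻¹)) :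
    p = q := by
  apply Polynomial.funext
  intro w
  obtain ⟨z, hz0, hzw⟩ := exists_add_inv w
  rw [← hzw]; exact h z hz0

section Trec
variable (T : ℕ → Polynomial ℂ)
  (hT : ∀ (r : ℕ) (z : ℂ), z ≠ 0 → (T r).eval (z + z⁻¹) = z ^ r + z⁻¹ ^ r)
include hT

lemma T_zero : T 0 = C 2 := by
  apply poly_ext; intro z hz; rw [hT 0 z hz]; norm_num

lemma T_one : T 1 = X := by
  apply poly_ext; intro z hz; rw [hT 1 z hz]; simp

lemma T_rec (n : ℕ) : T (n + 2) = X * T (n + 1) - T n := by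
  apply poly_ext; intro z hz
  rw [hT (n+2) z hz]
  simp only [eval_sub, eval_mul, eval_X, hT (n+1) z hz, hT n z hz]
  have h := mul_inv_cancel₀ hz
  linear_combination (-(z⁻¹ ^ n + z ^ n)) * h
end Trec


def GoodT (p : ℂ[X]) (n : ℕ) : Prop :=
  p.natDegree ≤ n ∧ p.coeff n = 1 ∧ (∀ j, n = j + 1 → p.coeff j = 0) ∧
    (∀ j, n = j + 2 → p.coeff j = -(n : ℂ))

lemma goodT_X : GoodT X 1 := by
  refine ⟨natDegree_X.le, coeff_X_one, ?_, ?_⟩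
  · intro j hj
    have : j = 0 := by omega
    subst this; simp
  · intro j hj; omega

lemma goodT_step {p q r : ℂ[X]} {m : ℕ} (hp : GoodT p (m + 1)) (hq : GoodT q (m + 2))
    (hr : r = X * q - p) : GoodT r (m + 3) := by
  obtain ⟨hp1, hp2, hp3, hp4⟩ := hp
  obtain ⟨hq1, hq2, hq3, hq4⟩ := hq
  subst hr
  have hplt : ∀ k, m + 1 < k → p.coeff k = 0 := fun k hk =>
    coeff_eq_zero_of_natDegree_lt (lt_of_le_of_lt hp1 hk)
  refine ⟨?_, ?_, ?_, ?_⟩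
  · refine (natDegree_sub_le _ _).trans ?_
    simp only [max_le_iff]
    constructor
    · exact (natDegree_mul_le).trans (by simp [natDegree_X]; omega)
    · omega
  · rw [coeff_sub, show m + 3 = (m + 2) + 1 from rfl, coeff_X_mul, hq2,
      hplt (m + 3) (by omega)]; ring
  · intro j hj
    have : j = m + 2 := by omega
    subst this
    rw [coeff_sub, show m + 2 = (m + 1) + 1 from rfl, coeff_X_mul,
      hq3 (m + 1) rfl, hplt (m + 2) (by omega)]; ring
  · intro j hj
    have : j = m + 1 := by omega
    subst this
    rw [coeff_sub, show m + 1 = m + 1 from rfl, coeff_X_mul, hq4 m rfl, hp2]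
    push_cast; ring

section Tfacts
variable (T : ℕ → Polynomial ℂ)
  (hT0 : T 0 = C 2) (hT1 : T 1 = X) (hTrec : ∀ n, T (n + 2) = X * T (n + 1) - T n)
include hT0 hT1 hTrec

lemma goodT_T : ∀ m : ℕ, GoodT (T (m + 1)) (m + 1) ∧ GoodT (T (m + 2)) (m + 2) := by
  intro m
  induction m with
  | zero =>
    have h1 : GoodT (T 1) 1 := by rw [hT1]; exact goodT_X
    refine ⟨h1, ?_⟩
    have h2 : T 2 = X * X - C 2 := by rw [hTrec 0, hT1, hT0]
    have h2' : T 2 = X ^ 2 - C 2 := by rw [h2]; ring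
    rw [h2']
    refine ⟨?_, ?_, ?_, ?_⟩
    · refine (natDegree_sub_le _ _).trans ?_
      simp [natDegree_X_pow, natDegree_C]
    · simp
    · intro j hj
      have : j = 1 := by omega
      subst this; simp [coeff_X_pow, coeff_C]
    · intro j hj
      have : j = 0 := by omega
      subst this; norm_num [coeff_X_pow, coeff_C]
  | succ m ih =>
    exact ⟨ih.2, goodT_step ih.1 ih.2 (hTrec (m + 1))⟩
end Tfacts

lemma qpow_coeff (u v : ℂ) (j n : ℕ) :
    ((C u⁻¹ * (X - C v)) ^ j).coeff n = u⁻¹ ^ j * ((-v) ^ (j - n) * (j.choose n)) := by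
  have h : (X - C v : ℂ[X]) = X + C (-v) := by rw [map_neg]; ring
  rw [h, mul_pow, ← C_pow, coeff_C_mul, coeff_X_add_C_pow]

lemma comp_coeff (p q' : ℂ[X]) (N n : ℕ) (h : p.natDegree < N) :
    (p.comp q').coeff n = ∑ j ∈ Finset.range N, p.coeff j * (q' ^ j).coeff n := by
  conv_lhs => rw [p.as_sum_range' N h]
  rw [Polynomial.sum_comp, finset_sum_coeff]
  refine Finset.sum_congr rfl fun j _ => ?_
  rw [monomial_comp, coeff_C_mul]

lemma Gcoeff (p : ℂ[X]) (u v : ℂ) (m : ℕ) (hg : GoodT p (m + 2)) :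
    (p.comp (C u⁻¹ * (X - C v))).coeff (m + 2) = u⁻¹ ^ (m + 2) ∧
    (p.comp (C u⁻¹ * (X - C v))).coeff (m + 1) = u⁻¹ ^ (m + 2) * (-v) * (m + 2) ∧
    (p.comp (C u⁻¹ * (X - C v))).coeff m
      = -(m + 2 : ℂ) * u⁻¹ ^ m + u⁻¹ ^ (m + 2) * v ^ 2 * ((m + 2).choose m) := by
  obtain ⟨h1, h2, h3, h4⟩ := hg
  have key : ∀ n, (p.comp (C u⁻¹ * (X - C v))).coeff n
      = ∑ j ∈ Finset.range (m + 3), p.coeff j * ((C u⁻¹ * (X - C v)) ^ j).coeff n :=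
    fun n => comp_coeff p _ (m + 3) n (by omega)
  have hsmall : ∀ n : ℕ, m ≤ n →
      ∑ j ∈ Finset.range m, p.coeff j * ((C u⁻¹ * (X - C v)) ^ j).coeff n = 0 := by
    intro n hn
    refine Finset.sum_eq_zero fun j hj => ?_
    rw [qpow_coeff, Nat.choose_eq_zero_of_lt (lt_of_lt_of_le (Finset.mem_range.mp hj) hn)]
    simp
  refine ⟨?_, ?_, ?_⟩
  · rw [key, Finset.sum_range_succ, Finset.sum_range_succ, Finset.sum_range_succ,
      hsmall _ (by omega), qpow_coeff, qpow_coeff, qpow_coeff, h2,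
      Nat.choose_eq_zero_of_lt (by omega), Nat.choose_eq_zero_of_lt (by omega),
      Nat.choose_self, Nat.sub_self]
    simp
  · rw [key, Finset.sum_range_succ, Finset.sum_range_succ, Finset.sum_range_succ,
      hsmall _ (by omega), qpow_coeff, qpow_coeff, qpow_coeff, h2, h3 (m + 1) rfl,
      Nat.choose_eq_zero_of_lt (by omega), Nat.choose_succ_self_right,
      show (m + 2) - (m + 1) = 1 from by omega]
    push_cast; ring
  · rw [key, Finset.sum_range_succ, Finset.sum_range_succ, Finset.sum_range_succ,
      hsmall _ (by omega), qpow_coeff, qpow_coeff, qpow_coeff, h2, h3 (m + 1) rfl,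
      h4 m rfl, Nat.choose_self, Nat.sub_self,
      show (m + 2) - m = 2 from by omega]
    push_cast; ring


lemma uv_mem (K : Subfield ℂ) (u v σ : ℂ) (hu : u ≠ 0) (hσ : σ = 1 ∨ σ = -1)
    (m k : ℕ) (hm : m = k + k)
    (hA : u * (σ * u⁻¹ ^ (m + 2)) ∈ K)
    (hB : u * (σ * (u⁻¹ ^ (m + 2) * (-v) * (m + 2))) ∈ K)
    (hC : u * (σ * (-(m + 2 : ℂ) * u⁻¹ ^ m + u⁻¹ ^ (m + 2) * v ^ 2 * ((m + 2).choose m)))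
        + (if m = 0 then v else 0) ∈ K) :
    u ∈ K ∧ v ∈ K := by
  have hσ0 : σ ≠ 0 := by rcases hσ with rfl | rfl <;> norm_num
  have hσ2 : σ * σ = 1 := by rcases hσ with rfl | rfl <;> norm_num
  have hσK : σ ∈ K := by
    rcases hσ with rfl | rfl
    · exact K.one_mem
    · exact K.neg_mem K.one_mem
  have hiu : u⁻¹ ≠ 0 := inv_ne_zero hu
  have hm2 : ((m : ℂ) + 2) ≠ 0 := by
    have : (0:ℝ) < (m:ℝ) + 2 := by positivity
    intro h
    have := congrArg Complex.re h
    simp at this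
    norm_cast at this
  set A := u * (σ * u⁻¹ ^ (m + 2)) with hAdef
  have hAne : A ≠ 0 := by
    simp only [hAdef]
    exact mul_ne_zero hu (mul_ne_zero hσ0 (pow_ne_zero _ hiu))
  have h2K : (2 : ℂ) ∈ K := by
    have := natCast_mem K 2
    push_cast at this
    exact this
  have hm2K : ((m : ℂ) + 2) ∈ K := K.add_mem (natCast_mem K m) h2K
  -- v ∈ K
  have hveq : v = -(u * (σ * (u⁻¹ ^ (m + 2) * (-v) * (m + 2)))) / (A * ((m:ℂ) + 2)) := by
    rw [hAdef]
    field_simp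
  have hvK : v ∈ K := by
    rw [hveq]
    exact K.div_mem (K.neg_mem hB) (K.mul_mem hA hm2K)
  -- B₂ ∈ K
  set B₂ := u * (σ * u⁻¹ ^ m) with hB₂def
  have hB₂eq : B₂ = (A * v ^ 2 * ((m + 2).choose m) + (if m = 0 then v else 0)
      - (u * (σ * (-(m + 2 : ℂ) * u⁻¹ ^ m + u⁻¹ ^ (m + 2) * v ^ 2 * ((m + 2).choose m)))
        + (if m = 0 then v else 0))) / ((m : ℂ) + 2) := by
    rw [hB₂def, hAdef, eq_div_iff hm2]
    ring
  have hδK : (if m = 0 then v else 0) ∈ K := by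
    split
    · exact hvK
    · exact K.zero_mem
  have hchK : ((((m + 2).choose m : ℕ)) : ℂ) ∈ K := natCast_mem K _
  have hB₂K : B₂ ∈ K := by
    rw [hB₂eq]
    exact K.div_mem (K.sub_mem (K.add_mem (K.mul_mem (K.mul_mem hA (K.pow_mem hvK 2)) hchK) hδK) hC) hm2K
  -- u² ∈ K
  have key : u ^ 2 * (u * (σ * u⁻¹ ^ (m + 2))) = u * (σ * u⁻¹ ^ m) := by
    rw [inv_pow, inv_pow]
    field_simp
    ring
  have hu2eq : u ^ 2 = B₂ / A := (eq_div_iff hAne).mpr key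
  have hu2K : u ^ 2 ∈ K := by rw [hu2eq]; exact K.div_mem hB₂K hA
  -- u ∈ K
  have hueq : u = B₂ * σ * (u ^ 2) ^ k := by
    rw [hB₂def]
    have hup : (u ^ 2) ^ k = u ^ m := by rw [hm, ← pow_mul]; ring_nf
    rw [hup]
    have hum : u ^ m * u⁻¹ ^ m = 1 := by rw [← mul_pow, mul_inv_cancel₀ hu, one_pow]
    linear_combination (-u) * hσ2 - u * σ ^ 2 * hum
  have huK : u ∈ K := by
    rw [hueq]
    exact K.mul_mem (K.mul_mem hB₂K hσK) (K.pow_mem hu2K k)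
  exact ⟨huK, hvK⟩

lemma conic_mem_iff (ε u v : ℂ) (hε0 : ε ≠ 0) (p : ℂ × ℂ) :
    p ∈ conicSet ε u v ↔
      (p.1 - v) ^ 2 - (ε + ε⁻¹) * (p.1 - v) * (p.2 - v) + (p.2 - v) ^ 2
        + ((ε + ε⁻¹) ^ 2 - 4) * u ^ 2 = 0 := by
  have h1 : ε * ε⁻¹ = 1 := mul_inv_cancel₀ hε0
  simp only [conicSet, Set.mem_setOf_eq]
  constructor
  · intro h; linear_combination h + 4 * u ^ 2 * h1
  · intro h; linear_combination h - 4 * u ^ 2 * h1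

lemma c_mem (K : Subfield ℂ) (c u v : ℂ) (hvK : v ∈ K)
    (S : Set (ℂ × ℂ)) (hS : S.Infinite)
    (hconic : ∀ p ∈ S, (p.1 - v) ^ 2 - c * (p.1 - v) * (p.2 - v) + (p.2 - v) ^ 2
      + (c ^ 2 - 4) * u ^ 2 = 0)
    (hK : ∀ p ∈ S, p.1 ∈ K ∧ p.2 ∈ K) : c ∈ K := by
  by_cases hcase : ∃ p ∈ S, ∃ q ∈ S, (p.1 - v) * (p.2 - v) ≠ (q.1 - v) * (q.2 - v)
  · obtain ⟨p, hp, q, hq, hne⟩ := hcase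
    have e1 := hconic p hp
    have e2 := hconic q hq
    have hc : c = ((p.1 - v) ^ 2 + (p.2 - v) ^ 2 - (q.1 - v) ^ 2 - (q.2 - v) ^ 2)
        / ((p.1 - v) * (p.2 - v) - (q.1 - v) * (q.2 - v)) := by
      rw [eq_div_iff (sub_ne_zero.mpr hne)]
      linear_combination e2 - e1
    have hp1 := (hK p hp).1
    have hp2 := (hK p hp).2
    have hq1 := (hK q hq).1
    have hq2 := (hK q hq).2
    rw [hc]
    exact K.div_mem
      (K.sub_mem (K.sub_mem (K.add_mem (K.pow_mem (K.sub_mem hp1 hvK) 2)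
        (K.pow_mem (K.sub_mem hp2 hvK) 2)) (K.pow_mem (K.sub_mem hq1 hvK) 2))
        (K.pow_mem (K.sub_mem hq2 hvK) 2))
      (K.sub_mem (K.mul_mem (K.sub_mem hp1 hvK) (K.sub_mem hp2 hvK))
        (K.mul_mem (K.sub_mem hq1 hvK) (K.sub_mem hq2 hvK)))
  · push_neg at hcase
    obtain ⟨p₀, hp₀⟩ := hS.nonempty
    set t := (p₀.1 - v) * (p₀.2 - v) with htdef
    set E := (p₀.1 - v) ^ 2 + (p₀.2 - v) ^ 2 with hEdef
    have hsum : ∀ p ∈ S, (p.1 - v) ^ 2 + (p.2 - v) ^ 2 = E := by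
      intro p hp
      have h1 := hconic p hp
      have h2 := hconic p₀ hp₀
      have h3 := hcase p hp p₀ hp₀
      linear_combination h1 - h2 + c * h3
    set P : ℂ[X] := (X - C v) ^ 4 + (C (t ^ 2) - C E * (X - C v) ^ 2) with hPdef
    have hPmonic : P.Monic := by
      apply Polynomial.Monic.add_of_left ((monic_X_sub_C v).pow 4)
      have h4 : ((X - C v : ℂ[X]) ^ 4).degree = 4 := by
        rw [degree_pow, degree_X_sub_C]; rfl
      rw [h4]
      refine lt_of_le_of_lt (degree_sub_le _ _) ?_
      rw [max_lt_iff]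
      constructor
      · exact lt_of_le_of_lt degree_C_le (by norm_num)
      · refine lt_of_le_of_lt (degree_mul_le _ _) ?_
        have h2 : ((X - C v : ℂ[X]) ^ 2).degree = 2 := by
          rw [degree_pow, degree_X_sub_C]; rfl
        refine lt_of_le_of_lt (add_le_add degree_C_le h2.le) ?_
        norm_num
    have hPne : P ≠ 0 := hPmonic.ne_zero
    have hroot : ∀ p ∈ S, P.IsRoot p.1 ∧ P.IsRoot p.2 := by
      intro p hp
      have hs := hsum p hp
      have ht := hcase p hp p₀ hp₀
      constructor
      · show P.eval p.1 = 0
        simp only [hPdef, eval_add, eval_sub, eval_mul, eval_pow, eval_X, eval_C]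
        linear_combination ((p.1 - v) ^ 2) * hs - ((p.1 - v) * (p.2 - v) + t) * ht
      · show P.eval p.2 = 0
        simp only [hPdef, eval_add, eval_sub, eval_mul, eval_pow, eval_X, eval_C]
        linear_combination ((p.2 - v) ^ 2) * hs - ((p.1 - v) * (p.2 - v) + t) * ht
    have hsub : S ⊆ {x : ℂ | P.IsRoot x} ×ˢ {x : ℂ | P.IsRoot x} := by
      intro p hp
      exact ⟨(hroot p hp).1, (hroot p hp).2⟩
    exact absurd (((P.finite_setOf_isRoot hPne).prod (P.finite_setOf_isRoot hPne)).subset hsub) hS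

lemma conic_infinite (K : Subfield ℂ) (ε u v : ℂ) (hε0 : ε ≠ 0)
    (hc2 : (ε + ε⁻¹) ^ 2 - 4 ≠ 0) (hu : u ≠ 0)
    (huK : u ∈ K) (hvK : v ∈ K) (hcK : ε + ε⁻¹ ∈ K) :
    {p : ℂ × ℂ | p ∈ conicSet ε u v ∧ p.1 ∈ K ∧ p.2 ∈ K}.Infinite := by
  set c := ε + ε⁻¹ with hcdef
  set Q : ℂ[X] := X ^ 2 - C c * X + 1 with hQdef
  have hQne : Q ≠ 0 := by
    intro h
    have : Q.coeff 2 = 1 := by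
      simp [hQdef, coeff_X_pow, coeff_C, coeff_one]
    rw [h] at this
    simp at this
  have hBadfin : {n : ℕ | ((n : ℂ)) ^ 2 - c * n + 1 = 0}.Finite := by
    have : {n : ℕ | ((n : ℂ)) ^ 2 - c * n + 1 = 0}
        = (Nat.cast : ℕ → ℂ) ⁻¹' {x : ℂ | Q.IsRoot x} := by
      ext n
      simp [hQdef, IsRoot]
    rw [this]
    exact Set.Finite.preimage Nat.cast_injective.injOn (Q.finite_setOf_isRoot hQne)
  have hG : {n : ℕ | ((n : ℂ)) ^ 2 - c * n + 1 = 0}ᶜ.Infinite := hBadfin.infinite_compl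
  set w : ℕ → ℂ := fun n => ((c ^ 2 - 4) * u) / ((n : ℂ) ^ 2 - c * n + 1) with hwdef
  set f : ℕ → ℂ × ℂ := fun n => (v + 2 * u + w n, v + c * u + n * w n) with hfdef
  have hwne : ∀ n ∈ {n : ℕ | ((n : ℂ)) ^ 2 - c * n + 1 = 0}ᶜ, w n ≠ 0 := by
    intro n hn
    exact div_ne_zero (mul_ne_zero hc2 hu) hn
  have hmem : ∀ n ∈ {n : ℕ | ((n : ℂ)) ^ 2 - c * n + 1 = 0}ᶜ,
      f n ∈ {p : ℂ × ℂ | p ∈ conicSet ε u v ∧ p.1 ∈ K ∧ p.2 ∈ K} := by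
    intro n hn
    have hden : (n : ℂ) ^ 2 - c * n + 1 ≠ 0 := hn
    have h2K : (2 : ℂ) ∈ K := by simpa using natCast_mem K 2
    have h4K : (4 : ℂ) ∈ K := by simpa using natCast_mem K 4
    refine ⟨?_, ?_, ?_⟩
    · rw [conic_mem_iff ε u v hε0]
      show (v + 2 * u + w n - v) ^ 2 - c * (v + 2 * u + w n - v) * (v + c * u + n * w n - v)
        + (v + c * u + n * w n - v) ^ 2 + (c ^ 2 - 4) * u ^ 2 = 0
      have hW : w n * ((n : ℂ) ^ 2 - c * n + 1) = (c ^ 2 - 4) * u := div_mul_cancel₀ _ hden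
      linear_combination w n * hW
    · exact K.add_mem (K.add_mem hvK (K.mul_mem h2K huK))
        (K.div_mem (K.mul_mem (K.sub_mem (K.pow_mem hcK 2)
          h4K) huK)
          (K.add_mem (K.sub_mem (K.pow_mem (natCast_mem K n) 2)
            (K.mul_mem hcK (natCast_mem K n))) K.one_mem))
    · exact K.add_mem (K.add_mem hvK (K.mul_mem hcK huK))
        (K.mul_mem (natCast_mem K n)
          (K.div_mem (K.mul_mem (K.sub_mem (K.pow_mem hcK 2)
            h4K) huK)
            (K.add_mem (K.sub_mem (K.pow_mem (natCast_mem K n) 2)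
              (K.mul_mem hcK (natCast_mem K n))) K.one_mem)))
  have hinj : Set.InjOn f {n : ℕ | ((n : ℂ)) ^ 2 - c * n + 1 = 0}ᶜ := by
    intro a ha b hb hfe
    have h1 : w a = w b := by
      have := congrArg Prod.fst hfe
      simpa [hfdef] using this
    have h2 : (a : ℂ) * w a = (b : ℂ) * w b := by
      have := congrArg Prod.snd hfe
      simpa [hfdef] using this
    rw [h1] at h2
    have := mul_right_cancel₀ (hwne b hb) h2
    exact_mod_cast this
  exact ((hG.image hinj).mono (Set.image_subset_iff.mpr hmem))


theorem stmt18 (K : Subfield ℂ) [NumberField K]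
    (T : ℕ → Polynomial ℂ)
    (hT : ∀ (r : ℕ) (z : ℂ), z ≠ 0 → (T r).eval (z + z⁻¹) = z ^ r + z⁻¹ ^ r)
    (d r : ℕ) (hd : 2 < d) (hr : 2 ≤ r) (hre : Even r)
    (ε : ℂ) (hε : IsPrimitiveRoot ε d)
    (σ : ℂ) (hσ : σ = 1 ∨ σ = -1)
    (u : ℂ) (hu : u ≠ 0) (v : ℂ)
    (h₁ : Polynomial ℂ)
    (hh₁ : h₁ = (C u * X + C v).comp ((C σ * T r).comp (C u⁻¹ * (X - C v))))
    (hh₁K : ∀ n : ℕ, h₁.coeff n ∈ K) :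
    ({p : ℂ × ℂ | p ∈ conicSet ε u v ∧ p.1 ∈ K ∧ p.2 ∈ K}.Infinite →
        u ∈ K ∧ v ∈ K ∧ ε + ε⁻¹ ∈ K) ∧
    (u ∈ K → v ∈ K → ε + ε⁻¹ ∈ K →
      (2 * u + v, u * (ε + ε⁻¹) + v) ∈ conicSet ε u v ∧
        (2 * u + v : ℂ) ∈ K ∧ (u * (ε + ε⁻¹) + v : ℂ) ∈ K ∧
        {p : ℂ × ℂ | p ∈ conicSet ε u v ∧ p.1 ∈ K ∧ p.2 ∈ K}.Infinite) := by
  -- basic facts about ε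
  have hε0 : ε ≠ 0 := by
    intro h
    have h1 := hε.pow_eq_one
    rw [h, zero_pow (by omega : d ≠ 0)] at h1
    exact zero_ne_one h1
  have hεinv : ε * ε⁻¹ = 1 := mul_inv_cancel₀ hε0
  have hc2 : (ε + ε⁻¹) ^ 2 - 4 ≠ 0 := by
    intro h
    have h2 : (ε - ε⁻¹) ^ 2 = 0 := by linear_combination h - 4 * hεinv
    have h3 : ε = ε⁻¹ := sub_eq_zero.mp (by
      exact pow_eq_zero_iff (by norm_num : (2:ℕ) ≠ 0) |>.mp h2)
    have h4 : ε ^ 2 = 1 := by rw [sq]; nth_rewrite 2 [h3]; exact hεinv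
    have h5 := Nat.le_of_dvd (by norm_num) (hε.dvd_of_pow_eq_one 2 h4)
    omega
  -- set up r = m + 2 with m even
  obtain ⟨m, rfl⟩ : ∃ m, r = m + 2 := ⟨r - 2, by omega⟩
  obtain ⟨k, hk⟩ : ∃ k, m = k + k := by
    rcases hre with ⟨k', hk'⟩
    exact ⟨k' - 1, by omega⟩
  -- coefficients of T (m+2)
  have good := (goodT_T T (T_zero T hT) (T_one T hT) (T_rec T hT) m).2
  obtain ⟨hG2, hG1, hG0⟩ := Gcoeff (T (m + 2)) u v m good
  have hcomp : ∀ n, h₁.coeff n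
      = u * (σ * ((T (m + 2)).comp (C u⁻¹ * (X - C v))).coeff n)
        + (if n = 0 then v else 0) := by
    intro n
    rw [hh₁]
    simp [add_comp, mul_comp, C_comp, X_comp, coeff_add, coeff_C_mul, coeff_C]
  have hAmem : u * (σ * u⁻¹ ^ (m + 2)) ∈ K := by
    have h := hh₁K (m + 2)
    rw [hcomp (m + 2), hG2] at h
    simpa using h
  have hBmem : u * (σ * (u⁻¹ ^ (m + 2) * (-v) * (m + 2))) ∈ K := by
    have h := hh₁K (m + 1)
    rw [hcomp (m + 1), hG1] at h
    simpa [mul_assoc] using h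
  have hCmem : u * (σ * (-(m + 2 : ℂ) * u⁻¹ ^ m + u⁻¹ ^ (m + 2) * v ^ 2 * ((m + 2).choose m)))
      + (if m = 0 then v else 0) ∈ K := by
    have h := hh₁K m
    rw [hcomp m, hG0] at h
    exact h
  obtain ⟨huK, hvK⟩ := uv_mem K u v σ hu hσ m k hk hAmem hBmem hCmem
  constructor
  · intro hinf
    refine ⟨huK, hvK, ?_⟩
    refine c_mem K (ε + ε⁻¹) u v hvK _ hinf ?_ ?_
    · intro p hp
      exact (conic_mem_iff ε u v hε0 p).mp hp.1
    · intro p hp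
      exact hp.2
  · intro huK' hvK' hcK
    refine ⟨?_, ?_, ?_, ?_⟩
    · rw [conic_mem_iff ε u v hε0]
      show (2 * u + v - v) ^ 2 - (ε + ε⁻¹) * (2 * u + v - v) * (u * (ε + ε⁻¹) + v - v)
        + (u * (ε + ε⁻¹) + v - v) ^ 2 + ((ε + ε⁻¹) ^ 2 - 4) * u ^ 2 = 0
      ring
    · exact K.add_mem (K.mul_mem (by simpa using natCast_mem K 2) huK') hvK'
    · exact K.add_mem (K.mul_mem huK' hcK) hvK'
    · exact conic_infinite K ε u v hε0 hc2 hu huK' hvK' hcK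
end

section
/- Let m and n be nonzero integers and ν ∈ ℂ∖{0}. If there exists a nonconstant polynomial φ ∈ ℂ[x] such that φ(x) = φ(y) for every pair (x,y) ∈ (ℂ∖{0})² with x^m y^n = ν, then n = −m. -/
open Polynomial

private lemma nonzero_infinite : (Set.Infinite {t : ℂ | t ≠ 0}) := by
  have : ({0}ᶜ : Set ℂ).Infinite := (Set.finite_singleton 0).infinite_compl
  convert this using 1
  ext t; simp

private lemma lemA (φ : Polynomial ℂ) (hd : 0 < φ.degree) (a b : ℕ)
    (c : ℂ) (hc : c ≠ 0)
    (h : ∀ t : ℂ, t ≠ 0 → φ.eval (t ^ a) = φ.eval (c * t ^ b)) : a = b := by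
  have hdn : 0 < φ.natDegree := natDegree_pos_iff_degree_pos.mpr hd
  have hcomp : φ.comp (X ^ a) = φ.comp (C c * X ^ b) := by
    apply Polynomial.eq_of_infinite_eval_eq
    apply nonzero_infinite.mono
    intro t ht
    simp only [Set.mem_setOf_eq, eval_comp, eval_pow, eval_X, eval_mul, eval_C]
    exact h t ht
  have h1 : (φ.comp (X ^ a)).natDegree = φ.natDegree * a := by
    simp [natDegree_comp]
  have h2 : (φ.comp (C c * X ^ b)).natDegree = φ.natDegree * b := by
    rw [natDegree_comp, natDegree_C_mul hc, natDegree_X_pow]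
  rw [hcomp, h2] at h1
  exact Nat.eq_of_mul_eq_mul_left hdn h1.symm

private lemma lemB (φ : Polynomial ℂ) (hd : 0 < φ.degree) (a b : ℕ) (ha : 0 < a)
    (c : ℂ)
    (h : ∀ t : ℂ, t ≠ 0 → φ.eval (t ^ a) = φ.eval (c * t⁻¹ ^ b)) : False := by
  set d := φ.natDegree with hdd
  have hdn : 0 < d := natDegree_pos_iff_degree_pos.mpr hd
  set χ : Polynomial ℂ :=
    ∑ k ∈ Finset.range (d + 1), C (φ.coeff k * c ^ k) * X ^ (b * (d - k)) with hχ
  have hchi : ∀ t : ℂ, t ≠ 0 → χ.eval t = φ.eval (c * t⁻¹ ^ b) * t ^ (b * d) := by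
    intro t ht
    rw [hχ, eval_finset_sum, Polynomial.eval_eq_sum_range, Finset.sum_mul]
    apply Finset.sum_congr rfl
    intro k hk
    have hk' : k ≤ d := Nat.lt_succ_iff.mp (Finset.mem_range.mp hk)
    simp only [eval_mul, eval_C, eval_pow, eval_X]
    have hsplit : t ^ (b * d) = t ^ (b * (d - k)) * t ^ (b * k) := by
      rw [← pow_add, ← Nat.mul_add, Nat.sub_add_cancel hk']
    rw [mul_pow, inv_pow, inv_pow, ← pow_mul, hsplit]
    field_simp
  have hcomp : φ.comp (X ^ a) * X ^ (b * d) = χ := by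
    apply Polynomial.eq_of_infinite_eval_eq
    apply nonzero_infinite.mono
    intro t ht
    simp only [Set.mem_setOf_eq, eval_mul, eval_comp, eval_pow, eval_X]
    rw [hchi t ht, h t ht]
  have hχdeg : χ.natDegree ≤ b * d := by
    apply Polynomial.natDegree_sum_le_of_forall_le
    intro k hk
    refine le_trans (natDegree_C_mul_le _ _) ?_
    rw [natDegree_X_pow]
    exact Nat.mul_le_mul_left b (Nat.sub_le d k)
  have hl : (φ.comp (X ^ a) * X ^ (b * d)).natDegree = d * a + b * d := by
    have h0 : φ.comp (X ^ a) ≠ 0 := by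
      intro h0
      have := natDegree_comp (p := φ) (q := (X : Polynomial ℂ) ^ a)
      rw [h0] at this
      simp [natDegree_X_pow] at this
      rcases this with h1 | h1
      · exact absurd h1 (by omega)
      · exact absurd h1 (by omega)
    rw [natDegree_mul h0 (pow_ne_zero _ X_ne_zero), natDegree_comp,
      natDegree_X_pow, natDegree_X_pow]
  rw [hcomp] at hl
  have : d * a + b * d ≤ b * d := hl ▸ hχdeg
  have hda : 0 < d * a := Nat.mul_pos hdn ha
  omega

theorem stmt19 (m n : ℤ) (hm : m ≠ 0) (hn : n ≠ 0) (ν : ℂ) (hν : ν ≠ 0)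
    (hφ : ∃ φ : Polynomial ℂ, 0 < φ.degree ∧
      ∀ x y : ℂ, x ≠ 0 → y ≠ 0 → x ^ m * y ^ n = ν → φ.eval x = φ.eval y) :
    n = -m := by
  obtain ⟨φ, hd, hφ⟩ := hφ
  -- pick c with c ^ n = ν
  have hcex : ∃ c : ℂ, c ≠ 0 ∧ c ^ n = ν := by
    rcases lt_or_gt_of_ne hn with hneg | hpos
    · obtain ⟨c, hc⟩ := IsAlgClosed.exists_pow_nat_eq (ν⁻¹) (n := n.natAbs)
        (by omega)
      have hc0 : c ≠ 0 := by
        intro h0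
        rw [h0, zero_pow (by omega : n.natAbs ≠ 0)] at hc
        exact hν (inv_eq_zero.mp hc.symm)
      refine ⟨c, hc0, ?_⟩
      have hnn : n = -(n.natAbs : ℤ) := by omega
      rw [hnn, zpow_neg, zpow_natCast, hc, inv_inv]
    · obtain ⟨c, hc⟩ := IsAlgClosed.exists_pow_nat_eq ν (n := n.natAbs) (by omega)
      have hc0 : c ≠ 0 := by
        intro h0
        rw [h0, zero_pow (by omega : n.natAbs ≠ 0)] at hc
        exact hν hc.symm
      refine ⟨c, hc0, ?_⟩
      have hnn : n = (n.natAbs : ℤ) := by omega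
      rw [hnn, zpow_natCast, hc]
  obtain ⟨c, hc, hcn⟩ := hcex
  have key : ∀ t : ℂ, t ≠ 0 → φ.eval (t ^ n) = φ.eval (c * t ^ (-m)) := by
    intro t ht
    apply hφ _ _ (zpow_ne_zero _ ht) (mul_ne_zero hc (zpow_ne_zero _ ht))
    rw [mul_zpow, ← zpow_mul, ← zpow_mul, hcn]
    rw [mul_comm (t ^ (n * m)), mul_assoc, ← zpow_add₀ ht]
    have : -m * n + n * m = 0 := by ring
    rw [this, zpow_zero, mul_one]
  set a := n.natAbs with hA
  set b := m.natAbs with hB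
  have ha : 0 < a := by omega
  have hb : 0 < b := by omega
  rcases lt_or_gt_of_ne hn with hnneg | hnpos <;>
    rcases lt_or_gt_of_ne hm with hmneg | hmpos
  · -- n < 0, m < 0 : impossible
    exfalso
    apply lemB φ hd a b ha c
    intro t ht
    have := key t⁻¹ (inv_ne_zero ht)
    have e1 : t⁻¹ ^ (n : ℤ) = t ^ a := by
      have : (n : ℤ) = -(a : ℤ) := by omega
      rw [this, zpow_neg, zpow_natCast, inv_pow, inv_inv]
    have e2 : t⁻¹ ^ (-m : ℤ) = t⁻¹ ^ b := by
      have : (-m : ℤ) = (b : ℤ) := by omega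
      rw [this, zpow_natCast]
    rw [e1, e2] at this
    exact this
  · -- n < 0, m > 0 : n = -m
    have hab : a = b := by
      apply lemA φ hd a b c hc
      intro t ht
      have := key t⁻¹ (inv_ne_zero ht)
      have e1 : t⁻¹ ^ (n : ℤ) = t ^ a := by
        have : (n : ℤ) = -(a : ℤ) := by omega
        rw [this, zpow_neg, zpow_natCast, inv_pow, inv_inv]
      have e2 : t⁻¹ ^ (-m : ℤ) = t ^ b := by
        have : (-m : ℤ) = -(b : ℤ) := by omega
        rw [this, zpow_neg, zpow_natCast, inv_pow, inv_inv]
      rw [e1, e2] at this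
      exact this
    omega
  · -- n > 0, m < 0 : n = -m
    have hab : a = b := by
      apply lemA φ hd a b c hc
      intro t ht
      have := key t ht
      have e1 : t ^ (n : ℤ) = t ^ a := by
        have : (n : ℤ) = (a : ℤ) := by omega
        rw [this, zpow_natCast]
      have e2 : t ^ (-m : ℤ) = t ^ b := by
        have : (-m : ℤ) = (b : ℤ) := by omega
        rw [this, zpow_natCast]
      rw [e1, e2] at this
      exact this
    omega
  · -- n > 0, m > 0 : impossible
    exfalso
    apply lemB φ hd a b ha c
    intro t ht
    have := key t ht
    have e1 : t ^ (n : ℤ) = t ^ a := by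
      have : (n : ℤ) = (a : ℤ) := by omega
      rw [this, zpow_natCast]
    have e2 : t ^ (-m : ℤ) = t⁻¹ ^ b := by
      have : (-m : ℤ) = -(b : ℤ) := by omega
      rw [this, zpow_neg, zpow_natCast, inv_pow]
    rw [e1, e2] at this
    exact this
end
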